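/- arXiv:1402.2724 — 3 statements merged into one kernel-verified Lean document; each statement's English description precedes it below -/
import Mathlib

section
/- Let q be a prime power, let a, c be fixed non-zero elements of F_q, let e be a divisor of q−1, and let p_1, …, p_s (s ≥ 1) be the distinct primes dividing q−1 but not e. Then N(q−1, q−1) ≥ ∑_{i=1}^s N(p_i·e, e) + ∑_{i=1}^s N(e, p_i·e) − (2s−1)·N(e, e). -/
/-- For a divisor `e` of `q - 1`, a non-zero element `g` of the finite field `F` is
`e`-free if whenever `g = h ^ d` with `h ∈ F` and `d ∣ e`, then `d = 1`. -/
def IsEFree {F : Type*} [Field F] (e : ℕ) (g : F) : Prop :=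
  g ≠ 0 ∧ ∀ d : ℕ, d ∣ e → (∃ h : F, h ^ d = g) → d = 1

/-- For fixed `a, c` in the finite field `F` and `e₁, e₂` dividing `q - 1`,
`Ncnt a c e₁ e₂` is the number of `g ∈ F` such that `g` is `e₁`-free and `a - c * g`
is `e₂`-free. -/
noncomputable def Ncnt {F : Type*} [Field F] [Fintype F] (a c : F) (e₁ e₂ : ℕ) : ℕ :=
  {g : F | IsEFree e₁ g ∧ IsEFree e₂ (a - c * g)}.ncard

/-- `θ(n) = ∏_{p ∣ n} (1 - 1/p)`, the product over the distinct primes dividing `n`. -/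
noncomputable def thetaFn (n : ℕ) : ℝ :=
  ∏ p ∈ n.primeFactors, (1 - 1 / (p : ℝ))

/-- `W(n) = 2^(ω n)`, the number of square-free divisors of `n`, where `ω n` is the
number of distinct prime factors of `n`. -/
def Wfn (n : ℕ) : ℕ := 2 ^ n.primeFactors.card

lemma isEFree_of_dvd {F : Type*} [Field F] {m n : ℕ} (hmn : m ∣ n) {x : F}
    (h : IsEFree n x) : IsEFree m x :=
  ⟨h.1, fun d hd => h.2 d (hd.trans hmn)⟩

lemma isEFree_iff_primes {F : Type*} [Field F] {n : ℕ} (hn : n ≠ 0) (g : F) :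
    IsEFree n g ↔ g ≠ 0 ∧ ∀ p ∈ n.primeFactors, ¬∃ h : F, h ^ p = g := by
  constructor
  · rintro ⟨hg, hfree⟩
    refine ⟨hg, fun p hp hh => ?_⟩
    exact (Nat.prime_of_mem_primeFactors hp).ne_one
      (hfree p (Nat.dvd_of_mem_primeFactors hp) hh)
  · rintro ⟨hg, hfree⟩
    refine ⟨hg, fun d hd hh => ?_⟩
    by_contra hd1
    have hp : d.minFac.Prime := Nat.minFac_prime hd1
    have hpd : d.minFac ∣ d := Nat.minFac_dvd d
    have hpn : d.minFac ∈ n.primeFactors := Nat.mem_primeFactors.mpr ⟨hp, hpd.trans hd, hn⟩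
    obtain ⟨h, hh⟩ := hh
    exact hfree d.minFac hpn ⟨h ^ (d / d.minFac), by
      rw [← pow_mul, Nat.div_mul_cancel hpd, hh]⟩

/-- Lemma 1, inequality (5): if `p₁, …, p_s` (`s ≥ 1`) are the distinct primes dividing
`q - 1` but not `e`, then
`N(q-1, q-1) ≥ ∑ᵢ N(pᵢ·e, e) + ∑ᵢ N(e, pᵢ·e) - (2s - 1)·N(e, e)`. -/
theorem sieve_inequality (q : ℕ) (hq : IsPrimePow q)
    (F : Type*) [Field F] [Fintype F] (hcard : Fintype.card F = q)
    (a c : F) (ha : a ≠ 0) (hc : c ≠ 0)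
    (e : ℕ) (he : e ∣ q - 1)
    (P : Finset ℕ) (hP : P = (q - 1).primeFactors \ e.primeFactors)
    (hs : P.Nonempty) :
    (Ncnt a c (q - 1) (q - 1) : ℤ) ≥
      ∑ p ∈ P, (Ncnt a c (p * e) e : ℤ) + ∑ p ∈ P, (Ncnt a c e (p * e) : ℤ)
        - (2 * P.card - 1) * (Ncnt a c e e : ℤ) := by
  classical
  have hq1 : q - 1 ≠ 0 := by have := hq.two_le; omega
  set S : ℕ → ℕ → Finset F :=
    fun e1 e2 => Finset.univ.filter (fun g => IsEFree e1 g ∧ IsEFree e2 (a - c * g)) with hS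
  have hmem : ∀ (e1 e2 : ℕ) (g : F),
      g ∈ S e1 e2 ↔ IsEFree e1 g ∧ IsEFree e2 (a - c * g) := by
    intro e1 e2 g; simp [hS]
  have hN : ∀ e1 e2 : ℕ, Ncnt a c e1 e2 = (S e1 e2).card := by
    intro e1 e2
    have hset : {g : F | IsEFree e1 g ∧ IsEFree e2 (a - c * g)} = ↑(S e1 e2) := by
      ext g; simp [hS]
    rw [Ncnt, hset, Set.ncard_coe_finset]
  set U := S e e with hU
  set T := S (q - 1) (q - 1) with hT
  have hTU : T ⊆ U := by
    intro g hg
    rw [hmem] at hg ⊢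
    exact ⟨isEFree_of_dvd he hg.1, isEFree_of_dvd he hg.2⟩
  have hAU : ∀ p ∈ P, S (p * e) e ⊆ U := by
    intro p _ g hg
    rw [hmem] at hg ⊢
    exact ⟨isEFree_of_dvd (dvd_mul_left e p) hg.1, hg.2⟩
  have hBU : ∀ p ∈ P, S e (p * e) ⊆ U := by
    intro p _ g hg
    rw [hmem] at hg ⊢
    exact ⟨hg.1, isEFree_of_dvd (dvd_mul_left e p) hg.2⟩
  -- key: e-free plus (p*e)-free for all p ∈ P implies (q-1)-free
  have key : ∀ x : F, IsEFree e x → (∀ p ∈ P, IsEFree (p * e) x) → IsEFree (q - 1) x := by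
    intro x hxe hxP
    rw [isEFree_iff_primes hq1]
    refine ⟨hxe.1, fun p hp hh => ?_⟩
    have hprime := Nat.prime_of_mem_primeFactors hp
    by_cases hpe : p ∈ e.primeFactors
    · exact hprime.ne_one (hxe.2 p (Nat.dvd_of_mem_primeFactors hpe) hh)
    · have hpP : p ∈ P := by rw [hP]; exact Finset.mem_sdiff.mpr ⟨hp, hpe⟩
      exact hprime.ne_one ((hxP p hpP).2 p (dvd_mul_right p e) hh)
  have hcover : U \ T ⊆
      P.biUnion (fun p => U \ S (p * e) e) ∪ P.biUnion (fun p => U \ S e (p * e)) := by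
    intro g hg
    rw [Finset.mem_sdiff] at hg
    by_contra hcon
    simp only [Finset.mem_union, Finset.mem_biUnion, Finset.mem_sdiff, not_or, not_exists,
      not_and, not_not] at hcon
    apply hg.2
    rw [hmem]
    have h1 : ∀ p ∈ P, g ∈ S (p * e) e := fun p hp => hcon.1 p hp hg.1
    have h2 : ∀ p ∈ P, g ∈ S e (p * e) := fun p hp => hcon.2 p hp hg.1
    have hge := (hmem e e g).mp hg.1
    constructor
    · exact key g hge.1 (fun p hp => ((hmem _ _ g).mp (h1 p hp)).1)
    · exact key (a - c * g) hge.2 (fun p hp => ((hmem _ _ g).mp (h2 p hp)).2)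
  have h1 : (U \ T).card ≤
      ∑ p ∈ P, (U \ S (p * e) e).card + ∑ p ∈ P, (U \ S e (p * e)).card := by
    calc (U \ T).card ≤ (P.biUnion (fun p => U \ S (p * e) e) ∪
          P.biUnion (fun p => U \ S e (p * e))).card := Finset.card_le_card hcover
      _ ≤ (P.biUnion (fun p => U \ S (p * e) e)).card +
          (P.biUnion (fun p => U \ S e (p * e))).card := Finset.card_union_le _ _
      _ ≤ _ := add_le_add Finset.card_biUnion_le Finset.card_biUnion_le
  have h1z : ((U \ T).card : ℤ) ≤
      ∑ p ∈ P, ((U \ S (p * e) e).card : ℤ) + ∑ p ∈ P, ((U \ S e (p * e)).card : ℤ) := by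
    exact_mod_cast h1
  have sd : ∀ (A B : Finset F), A ⊆ B → ((B \ A).card : ℤ) = (B.card : ℤ) - A.card := by
    intro A B h
    rw [Finset.card_sdiff_of_subset h, Nat.cast_sub (Finset.card_le_card h)]
  rw [sd T U hTU, Finset.sum_congr rfl (fun p hp => sd _ _ (hAU p hp)),
    Finset.sum_congr rfl (fun p hp => sd _ _ (hBU p hp)),
    Finset.sum_sub_distrib, Finset.sum_sub_distrib, Finset.sum_const, nsmul_eq_mul] at h1z
  simp only [hN]
  linarith
end

section
/- Let q be a prime power, let a, c be fixed non-zero elements of F_q, and let e_1, e_2 be divisors of q−1. Then N(e_1, e_2) = θ(e_1)·θ(e_2) · ∑_{d_1 | e_1} (μ(d_1)/φ(d_1)) ∑_{d_2 | e_2} (μ(d_2)/φ(d_2)) ∑_{χ_{d_1}} ∑_{χ_{d_2}} χ_{d_1}(1/c)·(χ_{d_1}·χ_{d_2})(a)·J(χ_{d_1}, χ_{d_2}), where the inner sums run over all multiplicative characters χ_{d_1} of F_q of exact order d_1 and all multiplicative characters χ_{d_2} of exact order d_2. -/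
section AuxLemmas

open Finset

lemma card_pow_eq_one_of_dvd {H : Type*} [CommGroup H] [Fintype H] [IsCyclic H]
    {d : ℕ} [DecidablePred fun x : H => x ^ d = 1] (hd : d ∣ Fintype.card H) :
    (Finset.univ.filter (fun x : H => x ^ d = 1)).card = d := by
  have hd0 : 0 < d := Nat.pos_of_dvd_of_pos hd Fintype.card_pos
  refine le_antisymm ?_ ?_
  · classical
    have h1 := IsCyclic.card_pow_eq_one_le (α := H) hd0
    refine le_trans (le_of_eq ?_) h1
    congr 1
    convert rfl using 2
  obtain ⟨g, hg⟩ := IsCyclic.exists_generator (α := H)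
  have hog : orderOf g = Fintype.card H := by rw [orderOf_eq_card_of_forall_mem_zpowers hg, Nat.card_eq_fintype_card]
  set x := g ^ (Fintype.card H / d) with hx
  have hox : orderOf x = d := by
    rw [hx, orderOf_pow, hog, Nat.gcd_eq_right (Nat.div_dvd_of_dvd hd),
      Nat.div_div_self hd Fintype.card_ne_zero]
  have hxd : x ^ d = 1 := by rw [← hox]; exact pow_orderOf_eq_one x
  calc d = (Finset.range d).card := (Finset.card_range d).symm
    _ ≤ _ := Finset.card_le_card_of_injOn (fun k => x ^ k)
        (fun k hk => by
          simp only [Finset.coe_filter, Finset.mem_univ, true_and, Set.mem_setOf_eq]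
          rw [← pow_mul, mul_comm, pow_mul, hxd, one_pow])
        (by
          intro i hi j hj hij
          have := pow_injOn_Iio_orderOf (x := x)
          rw [hox] at this
          exact this (by simpa using hi) (by simpa using hj) hij)

lemma sum_orderOf_coprime_mul {H : Type*} [CommGroup H] [Fintype H]
    {d₁ d₂ : ℕ} (hco : d₁.Coprime d₂) (f : H → ℂ) :
    (∑ z : H, if orderOf z = d₁ * d₂ then f z else 0) =
      ∑ x : H, (if orderOf x = d₁ then
        (∑ y : H, if orderOf y = d₂ then f (x * y) else 0) else 0) := by
  classical
  simp only [← Finset.sum_filter]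
  rw [← Finset.sum_product']
  obtain ⟨k₁, hk₁, hk₁'⟩ := Nat.chineseRemainder hco 1 0
  obtain ⟨k₂, hk₂, hk₂'⟩ := Nat.chineseRemainder hco 0 1
  have hd₂k₁ : d₂ ∣ k₁ := (Nat.modEq_zero_iff_dvd).mp hk₁'
  have hd₁k₂ : d₁ ∣ k₂ := (Nat.modEq_zero_iff_dvd).mp hk₂
  have hcop₁ : Nat.gcd d₁ k₁ = 1 := by
    have h1 : k₁ % d₁ = 1 % d₁ := hk₁
    rw [Nat.gcd_rec d₁ k₁, h1, ← Nat.gcd_rec]; simp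
  have hcop₂ : Nat.gcd d₂ k₂ = 1 := by
    have h1 : k₂ % d₂ = 1 % d₂ := hk₂'
    rw [Nat.gcd_rec d₂ k₂, h1, ← Nat.gcd_rec]; simp
  -- key order computations
  have horder : ∀ z : H, orderOf z = d₁ * d₂ →
      orderOf (z ^ k₁) = d₁ ∧ orderOf (z ^ k₂) = d₂ ∧ z ^ k₁ * z ^ k₂ = z := by
    intro z hz
    have hd₁0 : 0 < d₁ := by
      rcases Nat.eq_zero_or_pos d₁ with h | h; swap; · exact h
      exfalso; rw [h, zero_mul] at hz; exact (orderOf_pos z).ne' hz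
    have hd₂0 : 0 < d₂ := by
      rcases Nat.eq_zero_or_pos d₂ with h | h; swap; · exact h
      exfalso; rw [h, mul_zero] at hz; exact (orderOf_pos z).ne' hz
    have hg1 : Nat.gcd (d₁ * d₂) k₁ = d₂ := by
      refine Nat.dvd_antisymm ?_ (Nat.dvd_gcd ⟨d₁, mul_comm d₁ d₂⟩ hd₂k₁)
      have hco' : Nat.Coprime (Nat.gcd (d₁ * d₂) k₁) d₁ :=
        Nat.Coprime.coprime_dvd_left (Nat.gcd_dvd_right _ _) (Nat.coprime_comm.mp hcop₁)
      exact (Nat.Coprime.dvd_of_dvd_mul_left hco' (Nat.gcd_dvd_left _ _))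
    have hg2 : Nat.gcd (d₁ * d₂) k₂ = d₁ := by
      refine Nat.dvd_antisymm ?_ (Nat.dvd_gcd ⟨d₂, rfl⟩ hd₁k₂)
      have hco' : Nat.Coprime (Nat.gcd (d₁ * d₂) k₂) d₂ :=
        Nat.Coprime.coprime_dvd_left (Nat.gcd_dvd_right _ _) (Nat.coprime_comm.mp hcop₂)
      exact (Nat.Coprime.dvd_of_dvd_mul_right hco' (Nat.gcd_dvd_left _ _))
    refine ⟨?_, ?_, ?_⟩
    · rw [orderOf_pow, hz, hg1, Nat.mul_div_cancel _ hd₂0]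
    · rw [orderOf_pow, hz, hg2, Nat.mul_div_cancel_left _ hd₁0]
    · rw [← pow_add, ← pow_one z, ← pow_mul, one_mul, pow_eq_pow_iff_modEq, hz]
      exact (Nat.modEq_and_modEq_iff_modEq_mul hco).mp
        ⟨(hk₁.add hk₂).trans (by norm_num; rfl), (hk₁'.add hk₂').trans (by norm_num; rfl)⟩
  refine Finset.sum_bij' (i := fun z _ => (z ^ k₁, z ^ k₂))
    (j := fun p _ => p.1 * p.2) ?_ ?_ ?_ ?_ ?_
  · intro z hz
    simp only [Finset.mem_filter, Finset.mem_univ, true_and] at hz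
    obtain ⟨h1, h2, _⟩ := horder z hz
    simp [Finset.mem_product, h1, h2]
  · intro p hp
    simp only [Finset.mem_product, Finset.mem_filter, Finset.mem_univ, true_and] at hp
    simp only [Finset.mem_filter, Finset.mem_univ, true_and]
    rw [(Commute.all p.1 p.2).orderOf_mul_eq_mul_orderOf_of_coprime
      (by rw [hp.1, hp.2]; exact hco), hp.1, hp.2]
  · intro z hz
    simp only [Finset.mem_filter, Finset.mem_univ, true_and] at hz
    exact (horder z hz).2.2
  · intro p hp
    simp only [Finset.mem_product, Finset.mem_filter, Finset.mem_univ, true_and] at hp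
    have e1 : (p.1 * p.2) ^ k₁ = p.1 := by
      rw [mul_pow]
      have h2 : p.2 ^ k₁ = 1 := by
        rw [← orderOf_dvd_iff_pow_eq_one, hp.2]; exact hd₂k₁
      have h1 : p.1 ^ k₁ = p.1 := by
        conv_rhs => rw [← pow_one p.1]
        rw [pow_eq_pow_iff_modEq, hp.1]; exact hk₁
      rw [h1, h2, mul_one]
    have e2 : (p.1 * p.2) ^ k₂ = p.2 := by
      rw [mul_pow]
      have h1 : p.1 ^ k₂ = 1 := by
        rw [← orderOf_dvd_iff_pow_eq_one, hp.1]; exact hd₁k₂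
      have h2 : p.2 ^ k₂ = p.2 := by
        conv_rhs => rw [← pow_one p.2]
        rw [pow_eq_pow_iff_modEq, hp.2]; exact hk₂'
      rw [h1, h2, one_mul]
    simp [e1, e2]
  · intro z hz
    simp only [Finset.mem_filter, Finset.mem_univ, true_and] at hz
    rw [(horder z hz).2.2]

variable {F : Type*} [Field F] [Fintype F]


lemma unit_pow_iff {d : ℕ} (hd : d ≠ 0) (g : Fˣ) :
    (∃ h : F, h ^ d = (g : F)) ↔ ∃ h : Fˣ, h ^ d = g := by
  constructor
  · rintro ⟨h, hh⟩
    have hh0 : h ≠ 0 := by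
      intro h0; rw [h0, zero_pow hd] at hh; exact g.ne_zero hh.symm
    exact ⟨Units.mk0 h hh0, Units.ext (by push_cast; exact hh)⟩
  · rintro ⟨h, hh⟩
    exact ⟨(h : F), by rw [← Units.val_pow_eq_pow_val, hh]⟩

lemma exists_mulChar_pow_eq_one {d : ℕ} (g : Fˣ) (hg : ¬ ∃ h : Fˣ, h ^ d = g) :
    ∃ χ : MulChar F ℂ, χ ^ d = 1 ∧ χ (g : F) ≠ 1 := by
  set N := (powMonoidHom d : Fˣ →* Fˣ).range with hN
  haveI : Finite (Fˣ ⧸ N) := Quotient.finite _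
  haveI : NeZero (Monoid.exponent (Fˣ ⧸ N)) := ⟨Monoid.exponent_ne_zero_of_finite (G := Fˣ ⧸ N)⟩
  have hg1 : (QuotientGroup.mk g : Fˣ ⧸ N) ≠ 1 := by
    rw [Ne, QuotientGroup.eq_one_iff]
    rintro ⟨h, hh⟩
    exact hg ⟨h, hh⟩
  obtain ⟨φ, hφ⟩ := CommGroup.exists_apply_ne_one_of_hasEnoughRootsOfUnity (Fˣ ⧸ N) ℂ hg1
  set ψ : Fˣ →* ℂˣ := φ.comp (QuotientGroup.mk' N) with hψ
  refine ⟨MulChar.ofUnitHom ψ, ?_, ?_⟩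
  · apply MulChar.ext
    intro u
    rw [MulChar.pow_apply_coe, MulChar.one_apply_coe, MulChar.ofUnitHom_coe]
    have : ψ u ^ d = 1 := by
      rw [← map_pow, hψ]
      simp only [MonoidHom.comp_apply, QuotientGroup.mk'_apply]
      have : (QuotientGroup.mk (u ^ d) : Fˣ ⧸ N) = 1 :=
        QuotientGroup.eq_one_iff _ |>.mpr ⟨u, rfl⟩
      rw [this, map_one]
    calc ((ψ u : ℂ)) ^ d = ((ψ u ^ d : ℂˣ) : ℂ) := by push_cast; ring
      _ = 1 := by rw [this]; rfl
  · rw [MulChar.ofUnitHom_coe]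
    intro h1
    exact hφ (Units.ext (by simpa [hψ] using h1))

lemma mulChar_equiv : Nonempty (MulChar F ℂ ≃* Fˣ) := by
  haveI : NeZero (Monoid.exponent Fˣ) := ⟨Monoid.exponent_ne_zero_of_finite (G := Fˣ)⟩
  exact MulChar.mulEquiv_units F ℂ

open scoped Classical in
lemma sum_mulChar_pow_eq_one [Fintype (MulChar F ℂ)] {d : ℕ} (hd : d ∣ Fintype.card Fˣ)
    (g : Fˣ) :
    (∑ χ : MulChar F ℂ, if χ ^ d = 1 then χ (g : F) else 0) =
      if ∃ h : Fˣ, h ^ d = g then (d : ℂ) else 0 := by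
  classical
  rw [← Finset.sum_filter]
  obtain ⟨e⟩ := mulChar_equiv (F := F)
  haveI : IsCyclic (MulChar F ℂ) := isCyclic_of_surjective e.symm.toMonoidHom e.symm.surjective
  have hcard : Fintype.card (MulChar F ℂ) = Fintype.card Fˣ := Fintype.card_congr e.toEquiv
  split_ifs with hpow
  · obtain ⟨h, rfl⟩ := hpow
    have hall : ∀ χ ∈ univ.filter (fun χ : MulChar F ℂ => χ ^ d = 1),
        χ ((h ^ d : Fˣ) : F) = 1 := by
      intro χ hχ
      simp only [mem_filter] at hχ
      rw [Units.val_pow_eq_pow_val, map_pow, ← MulChar.pow_apply_coe, hχ.2,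
        MulChar.one_apply_coe]
    rw [Finset.sum_congr rfl hall, Finset.sum_const, nsmul_eq_mul, mul_one]
    norm_cast
    exact card_pow_eq_one_of_dvd (hcard ▸ hd)
  · obtain ⟨χ₀, hχ₀d, hχ₀g⟩ := exists_mulChar_pow_eq_one g hpow
    set S := ∑ χ ∈ univ.filter (fun χ : MulChar F ℂ => χ ^ d = 1), χ (g : F) with hS
    have key : χ₀ (g : F) * S = S := by
      rw [hS, Finset.mul_sum]
      refine Finset.sum_nbij' (i := fun χ => χ₀ * χ) (j := fun χ => χ₀⁻¹ * χ) ?_ ?_ ?_ ?_ ?_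
      · intro χ hχ
        simp only [mem_filter, mem_univ, true_and] at hχ ⊢
        rw [mul_pow, hχ, hχ₀d, one_mul]
      · intro χ hχ
        simp only [mem_filter, mem_univ, true_and] at hχ ⊢
        rw [mul_pow, hχ, inv_pow, hχ₀d, inv_one, one_mul]
      · intro χ _; rw [← mul_assoc, inv_mul_cancel, one_mul]
      · intro χ _; rw [← mul_assoc, mul_inv_cancel, one_mul]
      · intro χ _; rw [MulChar.mul_apply]
    have : (χ₀ (g : F) - 1) * S = 0 := by rw [sub_mul, one_mul, key, sub_self]
    rcases mul_eq_zero.mp this with h0 | h0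
    · exact absurd (by linear_combination h0) hχ₀g
    · exact h0
lemma Sd_one (g : Fˣ) [Fintype (MulChar F ℂ)] :
    (∑ χ : MulChar F ℂ, if orderOf χ = 1 then χ (g : F) else 0) = 1 := by
  classical
  simp only [orderOf_eq_one_iff]
  rw [Finset.sum_ite_eq' Finset.univ (1 : MulChar F ℂ) (fun χ => χ (g : F))]
  simp [MulChar.one_apply_coe]

open scoped Classical in
lemma Sd_prime [Fintype (MulChar F ℂ)] {p : ℕ} (hp : p.Prime) (hd : p ∣ Fintype.card Fˣ)
    (g : Fˣ) :
    (∑ χ : MulChar F ℂ, if orderOf χ = p then χ (g : F) else 0) =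
      (if ∃ h : Fˣ, h ^ p = g then (p : ℂ) else 0) - 1 := by
  have hsplit : ∀ χ : MulChar F ℂ, (if χ ^ p = 1 then χ (g : F) else 0) =
      (if orderOf χ = 1 then χ (g : F) else 0) + (if orderOf χ = p then χ (g : F) else 0) := by
    intro χ
    by_cases h1 : χ ^ p = 1
    · have hdvd : orderOf χ ∣ p := orderOf_dvd_of_pow_eq_one h1
      rcases (Nat.dvd_prime hp).mp hdvd with h | h
      · rw [if_pos h1, if_pos h, if_neg (by rw [h]; exact fun hh => hp.one_lt.ne' hh.symm), add_zero]
      · rw [if_pos h1, if_pos h, if_neg (by rw [h]; exact fun hh => hp.one_lt.ne' hh)]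
        · ring
    · have ho1 : orderOf χ ≠ 1 := fun h => h1 (by rw [← orderOf_dvd_iff_pow_eq_one, h]; exact one_dvd p)
      have hop : orderOf χ ≠ p := fun h => h1 (by rw [← orderOf_dvd_iff_pow_eq_one, h])
      rw [if_neg h1, if_neg ho1, if_neg hop, add_zero]
  have := sum_mulChar_pow_eq_one (F := F) hd g
  rw [Finset.sum_congr rfl (fun χ _ => hsplit χ), Finset.sum_add_distrib, Sd_one g] at this
  linear_combination this

open scoped Classical in
lemma theta_mul_sum_eq_indicator [Fintype (MulChar F ℂ)] {e : ℕ}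
    (he : e ∣ Fintype.card Fˣ) (g : Fˣ) :
    ((thetaFn e : ℝ) : ℂ) * ∑ d ∈ e.divisors,
        ((ArithmeticFunction.moebius d : ℂ) / (Nat.totient d : ℂ) *
          ∑ χ : MulChar F ℂ, (if orderOf χ = d then χ (g : F) else 0))
      = if (∀ p ∈ e.primeFactors, ¬ ∃ h : Fˣ, h ^ p = g) then 1 else 0 := by
  have he0 : e ≠ 0 := by
    rintro rfl
    exact Fintype.card_ne_zero (Nat.eq_zero_of_zero_dvd he)
  set f : ArithmeticFunction ℂ :=
    ⟨fun d => (ArithmeticFunction.moebius d : ℂ) / (Nat.totient d : ℂ) *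
      ∑ χ : MulChar F ℂ, (if orderOf χ = d then χ (g : F) else 0), by simp⟩ with hf
  have hfap : ∀ d : ℕ, f d = (ArithmeticFunction.moebius d : ℂ) / (Nat.totient d : ℂ) *
      ∑ χ : MulChar F ℂ, (if orderOf χ = d then χ (g : F) else 0) := fun d => rfl
  have hf1 : f 1 = 1 := by
    rw [hfap, ArithmeticFunction.moebius_apply_one, Nat.totient_one, Sd_one g]
    norm_num
  have hmult : f.IsMultiplicative := by
    refine ⟨hf1, ?_⟩
    intro m n hmn
    rcases Nat.eq_zero_or_pos m with hm0 | hm0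
    · subst hm0
      rw [Nat.coprime_zero_left] at hmn
      subst hmn
      simp [hf1]
    rcases Nat.eq_zero_or_pos n with hn0 | hn0
    · subst hn0
      rw [Nat.coprime_zero_right] at hmn
      subst hmn
      simp [hf1]
    have hS : (∑ χ : MulChar F ℂ, if orderOf χ = m * n then χ (g : F) else 0) =
        (∑ χ : MulChar F ℂ, if orderOf χ = m then χ (g : F) else 0) *
        (∑ χ : MulChar F ℂ, if orderOf χ = n then χ (g : F) else 0) := by
      rw [sum_orderOf_coprime_mul (H := MulChar F ℂ) hmn (fun χ : MulChar F ℂ => χ (g : F))]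
      rw [Finset.sum_mul]
      refine Finset.sum_congr rfl fun x _ => ?_
      by_cases hx : orderOf x = m
      · rw [if_pos hx, if_pos hx, Finset.mul_sum]
        refine Finset.sum_congr rfl fun y _ => ?_
        by_cases hy : orderOf y = n
        · rw [if_pos hy, if_pos hy, MulChar.mul_apply]
        · rw [if_neg hy, if_neg hy, mul_zero]
      · rw [if_neg hx, if_neg hx, zero_mul]
    rw [hfap, hfap, hfap, hS,
      ArithmeticFunction.isMultiplicative_moebius.map_mul_of_coprime hmn,
      Nat.totient_mul hmn]
    push_cast
    ring
  have hzeta : (f * (ArithmeticFunction.zeta : ArithmeticFunction ℕ)).IsMultiplicative :=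
    hmult.mul ArithmeticFunction.isMultiplicative_zeta.natCast
  have hsum : ∑ d ∈ e.divisors,
      ((ArithmeticFunction.moebius d : ℂ) / (Nat.totient d : ℂ) *
        ∑ χ : MulChar F ℂ, (if orderOf χ = d then χ (g : F) else 0))
      = (f * (ArithmeticFunction.zeta : ArithmeticFunction ℕ)) e := by
    rw [ArithmeticFunction.coe_mul_zeta_apply]
    exact Finset.sum_congr rfl fun d _ => (hfap d).symm
  have hprod : (f * (ArithmeticFunction.zeta : ArithmeticFunction ℕ)) e =
      ∏ p ∈ e.primeFactors,
        (f * (ArithmeticFunction.zeta : ArithmeticFunction ℕ)) (p ^ e.factorization p) := by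
    rw [hzeta.multiplicative_factorization _ he0]
    exact Nat.prod_factorization_eq_prod_primeFactors _
  have heval : ∀ p ∈ e.primeFactors,
      (f * (ArithmeticFunction.zeta : ArithmeticFunction ℕ)) (p ^ e.factorization p)
        = 1 + f p := by
    intro p hpmem
    have hp : p.Prime := Nat.prime_of_mem_primeFactors hpmem
    have hk : e.factorization p ≠ 0 := by
      rw [← Nat.support_factorization] at hpmem
      exact Finsupp.mem_support_iff.mp hpmem
    rw [ArithmeticFunction.coe_mul_zeta_apply, Nat.sum_divisors_prime_pow hp]
    have hval : ∀ j ∈ Finset.range (e.factorization p + 1),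
        f (p ^ j) = (if j = 0 then (1:ℂ) else 0) + (if j = 1 then f p else 0) := by
      intro j _
      match j with
      | 0 => simp [pow_zero, hf1]
      | 1 => simp [pow_one]
      | (j+2) =>
        have hμ : (ArithmeticFunction.moebius (p ^ (j+2)) : ℤ) = 0 := by
          rw [ArithmeticFunction.moebius_apply_prime_pow hp (Nat.succ_ne_zero _)]
          simp
        rw [hfap, hμ]
        simp
    rw [Finset.sum_congr rfl hval, Finset.sum_add_distrib]
    rw [Finset.sum_ite_eq' (Finset.range (e.factorization p + 1)) 0 (fun _ => (1:ℂ)),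
      Finset.sum_ite_eq' (Finset.range (e.factorization p + 1)) 1 (fun _ => f p)]
    rw [if_pos (Finset.mem_range.mpr (Nat.succ_pos _)),
      if_pos (Finset.mem_range.mpr (by omega : 1 < e.factorization p + 1))]
  have hθ : ((thetaFn e : ℝ) : ℂ) = ∏ p ∈ e.primeFactors, (1 - 1/(p:ℂ)) := by
    rw [thetaFn]
    push_cast
    rfl
  rw [hsum, hprod, Finset.prod_congr rfl heval, hθ, ← Finset.prod_mul_distrib]
  have hfactor : ∀ p ∈ e.primeFactors,
      (1 - 1/(p:ℂ)) * (1 + f p) = if ∃ h : Fˣ, h ^ p = g then 0 else 1 := by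
    intro p hpmem
    have hp : p.Prime := Nat.prime_of_mem_primeFactors hpmem
    have hpdvd : p ∣ Fintype.card Fˣ := (Nat.dvd_of_mem_primeFactors hpmem).trans he
    have hp0 : (p : ℂ) ≠ 0 := Nat.cast_ne_zero.mpr hp.pos.ne'
    have hp1 : (p : ℂ) - 1 ≠ 0 := by
      intro h
      have : (p : ℂ) = 1 := by linear_combination h
      exact hp.one_lt.ne' (by exact_mod_cast this)
    have hφ : ((Nat.totient p : ℕ) : ℂ) = (p : ℂ) - 1 := by
      rw [Nat.totient_prime hp]
      push_cast [Nat.cast_sub hp.one_lt.le]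
      ring
    have hμp : (ArithmeticFunction.moebius p : ℤ) = -1 :=
      ArithmeticFunction.moebius_apply_prime hp
    rw [hfap, Sd_prime hp hpdvd g, hμp, hφ]
    by_cases hpow : ∃ h : Fˣ, h ^ p = g
    · rw [if_pos hpow, if_pos hpow]
      field_simp
      push_cast; ring
    · rw [if_neg hpow, if_neg hpow]
      field_simp
      push_cast; ring
  rw [Finset.prod_congr rfl hfactor]
  by_cases hall : ∀ p ∈ e.primeFactors, ¬ ∃ h : Fˣ, h ^ p = g
  · rw [if_pos hall]
    exact Finset.prod_eq_one fun p hp => by rw [if_neg (hall p hp)]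
  · rw [if_neg hall]
    push_neg at hall
    obtain ⟨p, hpmem, hpow⟩ := hall
    exact Finset.prod_eq_zero hpmem (by rw [if_pos hpow])

lemma isEFree_iff_unit {e : ℕ} (he0 : e ≠ 0) (g : Fˣ) :
    IsEFree e ((g : F)) ↔ ∀ p ∈ e.primeFactors, ¬ ∃ h : Fˣ, h ^ p = g := by
  constructor
  · rintro ⟨-, hmin⟩ p hpmem ⟨h, hh⟩
    have hp := Nat.prime_of_mem_primeFactors hpmem
    have : p = 1 := hmin p (Nat.dvd_of_mem_primeFactors hpmem)
      ⟨(h : F), by rw [← Units.val_pow_eq_pow_val, hh]⟩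
    exact hp.one_lt.ne' this
  · intro hall
    refine ⟨Units.ne_zero g, ?_⟩
    intro d hd hex
    by_contra hd1
    have hp : d.minFac.Prime := Nat.minFac_prime hd1
    have hpe : d.minFac ∈ e.primeFactors :=
      Nat.mem_primeFactors.mpr ⟨hp, (Nat.minFac_dvd d).trans hd, he0⟩
    obtain ⟨h, hh⟩ := hex
    have hpow : ∃ h' : F, h' ^ d.minFac = (g : F) :=
      ⟨h ^ (d / d.minFac), by rw [← pow_mul, Nat.div_mul_cancel (Nat.minFac_dvd d), hh]⟩
    exact hall d.minFac hpe ((unit_pow_iff hp.pos.ne' g).mp hpow)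

open scoped Classical in
lemma vinogradov [Fintype (MulChar F ℂ)] {e : ℕ} (he : e ∣ Fintype.card Fˣ) (g : F) :
    ((thetaFn e : ℝ) : ℂ) * ∑ d ∈ e.divisors,
        ((ArithmeticFunction.moebius d : ℂ) / (Nat.totient d : ℂ) *
          ∑ χ : MulChar F ℂ, (if orderOf χ = d then χ g else 0))
      = if IsEFree e g then 1 else 0 := by
  have he0 : e ≠ 0 := by
    rintro rfl
    exact Fintype.card_ne_zero (Nat.eq_zero_of_zero_dvd he)
  by_cases hg : g = 0
  · subst hg
    have hz : ∀ χ : MulChar F ℂ, χ (0 : F) = 0 := fun χ =>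
      χ.map_nonunit (by simpa using not_isUnit_zero)
    have : ¬ IsEFree e (0 : F) := fun h => h.1 rfl
    simp [hz, this]
  · have hrw : g = ((Units.mk0 g hg : Fˣ) : F) := rfl
    rw [hrw, theta_mul_sum_eq_indicator he (Units.mk0 g hg)]
    exact (if_congr (isEFree_iff_unit he0 (Units.mk0 g hg)) rfl rfl).symm

lemma sum_jacobi {χ₁ χ₂ : MulChar F ℂ} {a c : F} (ha : a ≠ 0) (hc : c ≠ 0) :
    ∑ g : F, χ₁ g * χ₂ (a - c * g) = χ₁ c⁻¹ * (χ₁ * χ₂) a * jacobiSum χ₁ χ₂ := by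
  have hac : a * c⁻¹ ≠ 0 := mul_ne_zero ha (inv_ne_zero hc)
  calc ∑ g : F, χ₁ g * χ₂ (a - c * g)
      = ∑ t : F, χ₁ (a * c⁻¹ * t) * χ₂ (a - c * (a * c⁻¹ * t)) :=
        (Equiv.sum_comp (Equiv.mulLeft₀ (a * c⁻¹) hac)
          (fun g => χ₁ g * χ₂ (a - c * g))).symm
    _ = ∑ t : F, χ₁ c⁻¹ * ((χ₁ * χ₂) a * (χ₁ t * χ₂ (1 - t))) := by
        refine Finset.sum_congr rfl fun t _ => ?_
        have h1 : a - c * (a * c⁻¹ * t) = a * (1 - t) := by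
          field_simp
        rw [h1, map_mul, map_mul, map_mul, MulChar.mul_apply]
        ring
    _ = χ₁ c⁻¹ * (χ₁ * χ₂) a * jacobiSum χ₁ χ₂ := by
        rw [jacobiSum, ← Finset.mul_sum, ← Finset.mul_sum]
        ring


end AuxLemmas

open scoped Classical in
/-- Identity (4): for fixed non-zero `a, c ∈ F_q` and divisors `e₁, e₂` of `q - 1`,
`N(e₁, e₂) = θ(e₁)·θ(e₂) · ∑_{d₁ ∣ e₁} (μ(d₁)/φ(d₁)) ∑_{d₂ ∣ e₂} (μ(d₂)/φ(d₂))
  ∑_{χ_{d₁}} ∑_{χ_{d₂}} χ_{d₁}(1/c)·(χ_{d₁}·χ_{d₂})(a)·J(χ_{d₁}, χ_{d₂})`,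
where the inner sums run over all multiplicative characters of `F_q` of exact order `d₁`
(resp. `d₂`), and `J` is the Jacobi sum. -/
theorem N_eq_jacobi_sum (q : ℕ) (hq : IsPrimePow q)
    (F : Type*) [Field F] [Fintype F] (hcard : Fintype.card F = q)
    (a c : F) (ha : a ≠ 0) (hc : c ≠ 0)
    (e₁ e₂ : ℕ) (he₁ : e₁ ∣ q - 1) (he₂ : e₂ ∣ q - 1) :
    (Ncnt a c e₁ e₂ : ℂ) =
      ((thetaFn e₁ * thetaFn e₂ : ℝ) : ℂ) *
        ∑ d₁ ∈ e₁.divisors, ((ArithmeticFunction.moebius d₁ : ℂ) / (Nat.totient d₁ : ℂ)) *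
          ∑ d₂ ∈ e₂.divisors, ((ArithmeticFunction.moebius d₂ : ℂ) / (Nat.totient d₂ : ℂ)) *
            ∑ᶠ χ₁ : MulChar F ℂ, (if orderOf χ₁ = d₁ then
              ∑ᶠ χ₂ : MulChar F ℂ, (if orderOf χ₂ = d₂ then
                χ₁ c⁻¹ * (χ₁ * χ₂) a * jacobiSum χ₁ χ₂ else 0) else 0) := by
  letI : Fintype (MulChar F ℂ) := Fintype.ofFinite _
  have hu : Fintype.card Fˣ = q - 1 := by rw [Fintype.card_units, hcard]
  have he₁' : e₁ ∣ Fintype.card Fˣ := hu ▸ he₁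
  have he₂' : e₂ ∣ Fintype.card Fˣ := hu ▸ he₂
  set S₁ : ℕ → F → ℂ := fun d x => ∑ χ : MulChar F ℂ, if orderOf χ = d then χ x else 0 with hS
  set co : ℕ → ℂ := fun d =>
    (ArithmeticFunction.moebius d : ℂ) / (Nat.totient d : ℂ) with hco
  have hA : (Ncnt a c e₁ e₂ : ℂ) =
      ∑ g : F, (if IsEFree e₁ g then (1:ℂ) else 0) *
        (if IsEFree e₂ (a - c * g) then 1 else 0) := by
    rw [Ncnt, Set.ncard_eq_toFinset_card', Set.toFinset_setOf, Finset.card_filter]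
    push_cast
    refine Finset.sum_congr rfl fun g _ => ?_
    by_cases h1 : IsEFree e₁ g <;> by_cases h2 : IsEFree e₂ (a - c * g) <;> simp [h1, h2]
  have hE : ∀ d₁ d₂ : ℕ, (∑ g : F, S₁ d₁ g * S₁ d₂ (a - c * g))
      = ∑ χ₁ : MulChar F ℂ, (if orderOf χ₁ = d₁ then
          ∑ χ₂ : MulChar F ℂ, (if orderOf χ₂ = d₂ then
            χ₁ c⁻¹ * (χ₁ * χ₂) a * jacobiSum χ₁ χ₂ else 0) else 0) := by
    intro d₁ d₂
    have h1 : ∀ g : F, S₁ d₁ g * S₁ d₂ (a - c * g)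
        = ∑ χ₁ : MulChar F ℂ, ∑ χ₂ : MulChar F ℂ,
            (if orderOf χ₁ = d₁ then χ₁ g else 0) *
            (if orderOf χ₂ = d₂ then χ₂ (a - c * g) else 0) :=
      fun g => Finset.sum_mul_sum _ _ _ _
    rw [Finset.sum_congr rfl fun g _ => h1 g, Finset.sum_comm]
    refine Finset.sum_congr rfl fun χ₁ _ => ?_
    rw [Finset.sum_comm]
    by_cases h₁ : orderOf χ₁ = d₁
    · rw [if_pos h₁]
      refine Finset.sum_congr rfl fun χ₂ _ => ?_
      by_cases h₂ : orderOf χ₂ = d₂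
      · rw [if_pos h₂, ← sum_jacobi ha hc]
        exact Finset.sum_congr rfl fun g _ => by rw [if_pos h₁, if_pos h₂]
      · rw [if_neg h₂]
        exact Finset.sum_eq_zero fun g _ => by rw [if_neg h₂, mul_zero]
    · rw [if_neg h₁]
      exact Finset.sum_eq_zero fun χ₂ _ =>
        Finset.sum_eq_zero fun g _ => by rw [if_neg h₁, zero_mul]
  calc (Ncnt a c e₁ e₂ : ℂ)
      = ∑ g : F, (if IsEFree e₁ g then (1:ℂ) else 0) *
          (if IsEFree e₂ (a - c * g) then 1 else 0) := hA
    _ = ∑ g : F, (((thetaFn e₁ : ℝ) : ℂ) * ∑ d₁ ∈ e₁.divisors, co d₁ * S₁ d₁ g) *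
          (((thetaFn e₂ : ℝ) : ℂ) * ∑ d₂ ∈ e₂.divisors, co d₂ * S₁ d₂ (a - c * g)) := by
        refine Finset.sum_congr rfl fun g _ => ?_
        rw [← vinogradov he₁' g, ← vinogradov he₂' (a - c * g)]
    _ = ((thetaFn e₁ : ℝ) : ℂ) * ((thetaFn e₂ : ℝ) : ℂ) *
          ∑ g : F, (∑ d₁ ∈ e₁.divisors, co d₁ * S₁ d₁ g) *
            (∑ d₂ ∈ e₂.divisors, co d₂ * S₁ d₂ (a - c * g)) := by
        rw [Finset.mul_sum]
        exact Finset.sum_congr rfl fun g _ => by ring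
    _ = ((thetaFn e₁ : ℝ) : ℂ) * ((thetaFn e₂ : ℝ) : ℂ) *
          ∑ d₁ ∈ e₁.divisors, ∑ d₂ ∈ e₂.divisors, co d₁ * co d₂ *
            ∑ g : F, S₁ d₁ g * S₁ d₂ (a - c * g) := by
        congr 1
        have h1 : ∀ g : F, (∑ d₁ ∈ e₁.divisors, co d₁ * S₁ d₁ g) *
            (∑ d₂ ∈ e₂.divisors, co d₂ * S₁ d₂ (a - c * g))
            = ∑ d₁ ∈ e₁.divisors, ∑ d₂ ∈ e₂.divisors,
                (co d₁ * S₁ d₁ g) * (co d₂ * S₁ d₂ (a - c * g)) :=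
          fun g => Finset.sum_mul_sum _ _ _ _
        rw [Finset.sum_congr rfl fun g _ => h1 g, Finset.sum_comm]
        refine Finset.sum_congr rfl fun d₁ _ => ?_
        rw [Finset.sum_comm]
        refine Finset.sum_congr rfl fun d₂ _ => ?_
        rw [Finset.mul_sum]
        exact Finset.sum_congr rfl fun g _ => by ring
    _ = ((thetaFn e₁ * thetaFn e₂ : ℝ) : ℂ) *
          ∑ d₁ ∈ e₁.divisors, co d₁ *
            ∑ d₂ ∈ e₂.divisors, co d₂ *
              ∑ g : F, S₁ d₁ g * S₁ d₂ (a - c * g) := by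
        have hstep : ∀ d₁ ∈ e₁.divisors,
            (∑ d₂ ∈ e₂.divisors, co d₁ * co d₂ * ∑ g : F, S₁ d₁ g * S₁ d₂ (a - c * g))
              = co d₁ * ∑ d₂ ∈ e₂.divisors, co d₂ * ∑ g : F, S₁ d₁ g * S₁ d₂ (a - c * g) :=
          fun d₁ _ => by
            rw [Finset.mul_sum]
            exact Finset.sum_congr rfl fun d₂ _ => by ring
        rw [Finset.sum_congr rfl hstep]
        push_cast
        ring
    _ = _ := by
        simp only [finsum_eq_sum_of_fintype]
        refine congrArg _ ?_
        refine Finset.sum_congr rfl fun d₁ _ => ?_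
        refine congrArg _ ?_
        refine Finset.sum_congr rfl fun d₂ _ => ?_
        rw [hE d₁ d₂]
end

section
/- Let q ≥ 4 be a prime power, let a, c be fixed non-zero elements of F_q, let e be a divisor of q−1, let p_1, …, p_s (s ≥ 1) be the distinct primes dividing q−1 but not e, and set δ = 1 − 2∑_{i=1}^s 1/p_i. If δ > 0, then N(q−1, q−1) ≥ δ·θ(e)^2·√q·( √q − W(e)^2 − ((2s−1)/δ + 1)·W(e)^2 ). -/
open Finset

set_option linter.unusedSectionVars false

open scoped Classical

namespace SieveAux

variable {F : Type*} [Field F] [Fintype F] [DecidableEq F]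

noncomputable instance : Fintype (MulChar F ℂ) := Fintype.ofFinite _

noncomputable instance : DecidableEq (MulChar F ℂ) := Classical.decEq _

lemma exponent_ne_zero_complex : NeZero ((Monoid.exponent Fˣ : ℕ) : ℂ) :=
  ⟨Nat.cast_ne_zero.mpr Monoid.exponent_ne_zero_of_finite⟩

lemma card_mulChar : Fintype.card (MulChar F ℂ) = Fintype.card F - 1 := by
  have : NeZero ((Monoid.exponent Fˣ : ℕ) : ℂ) := exponent_ne_zero_complex
  have h := MulChar.card_eq_card_units_of_hasEnoughRootsOfUnity F ℂ
  rw [Nat.card_eq_fintype_card, Nat.card_eq_fintype_card] at h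
  rw [h, Fintype.card_units]

lemma isCyclic_mulChar : IsCyclic (MulChar F ℂ) := by
  have : NeZero ((Monoid.exponent Fˣ : ℕ) : ℂ) := exponent_ne_zero_complex
  obtain ⟨E⟩ := MulChar.mulEquiv_units F ℂ
  exact isCyclic_of_surjective E.symm E.symm.surjective

/-- The set of characters whose `d`-th power is trivial. -/
noncomputable def Xd (F : Type*) [Field F] [Fintype F] (d : ℕ) : Finset (MulChar F ℂ) :=
  univ.filter fun χ => χ ^ d = 1

lemma mem_Xd {d : ℕ} {χ : MulChar F ℂ} : χ ∈ Xd F d ↔ χ ^ d = 1 := by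
  simp [Xd]

/-- There is a character of maximal order generating the character group. -/
lemma exists_generator :
    ∃ lam : MulChar F ℂ, orderOf lam = Fintype.card F - 1 ∧
      ∀ χ : MulChar F ℂ, χ ∈ Submonoid.powers lam := by
  have : IsCyclic (MulChar F ℂ) := isCyclic_mulChar
  obtain ⟨lam, hlam⟩ := IsCyclic.exists_generator (α := MulChar F ℂ)
  refine ⟨lam, ?_, fun χ => mem_powers_iff_mem_zpowers.mpr (hlam χ)⟩
  rw [orderOf_eq_card_of_forall_mem_zpowers hlam, Nat.card_eq_fintype_card, card_mulChar]

/-- Orthogonality: summing all characters with `χ ^ d = 1` at `g ≠ 0` detects whether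
`g` is a `d`-th power. -/
lemma sum_Xd {d : ℕ} (hd : d ∣ Fintype.card F - 1) {g : F} (hg : g ≠ 0) :
    ∑ χ ∈ Xd F d, χ g = if ∃ h : F, h ^ d = g then (d : ℂ) else 0 := by
  classical
  set n := Fintype.card F - 1 with hn
  have hn0 : n ≠ 0 := by
    have : 2 ≤ Fintype.card F := Fintype.one_lt_card
    omega
  have hd0 : d ≠ 0 := fun h => hn0 (by simpa [h] using hd)
  have hnd : n / d * d = n := Nat.div_mul_cancel hd
  have hnd0 : n / d ≠ 0 := by
    intro h; rw [h] at hnd; simp at hnd; exact hn0 hnd.symm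
  obtain ⟨lam, hord, hgen⟩ := exists_generator (F := F)
  rw [← hn] at hord
  -- generator of Fˣ
  obtain ⟨z, hz⟩ := IsCyclic.exists_generator (α := Fˣ)
  have hordz : orderOf z = n := by
    rw [orderOf_eq_card_of_forall_mem_zpowers hz, Nat.card_eq_fintype_card,
      Fintype.card_units]
  -- `lam ^ m = 1 ↔ (lam z) ^ m = 1`
  have hlz : ∀ m : ℕ, lam ^ m = 1 ↔ (lam (z : F)) ^ m = 1 := by
    intro m
    constructor
    · intro h
      rw [← MulChar.pow_apply_coe lam m z, h, MulChar.one_apply_coe]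
    · intro h
      ext x
      obtain ⟨k, hk⟩ := mem_powers_iff_mem_zpowers.mpr (hz x)
      have hk' : z ^ k = x := hk
      rw [MulChar.one_apply_coe, MulChar.pow_apply_coe, ← hk']
      push_cast
      rw [map_pow, ← pow_mul, mul_comm k m, pow_mul, h, one_pow]
  set ω : ℂ := lam (z : F) with hω
  have hordω : orderOf ω = n := by
    have h2 : orderOf lam = orderOf ω := orderOf_eq_orderOf_iff.mpr fun m => hlz m
    rw [← h2, hord]
  have hωn : ω ^ n = 1 := by
    conv_lhs => rw [hordω.symm]
    exact pow_orderOf_eq_one ω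
  have hl1 : lam ^ n = 1 := by
    conv_lhs => rw [hord.symm]
    exact pow_orderOf_eq_one lam
  -- write g as z ^ k
  obtain ⟨k, hk⟩ : ∃ k : ℕ, (z : F) ^ k = g := by
    obtain ⟨k, hk⟩ := mem_powers_iff_mem_zpowers.mpr (hz (Units.mk0 g hg))
    have hk' : z ^ k = Units.mk0 g hg := hk
    exact ⟨k, by have := congrArg Units.val hk'; simpa using this⟩
  -- evaluation formula
  have heval : ∀ m : ℕ, (lam ^ m) g = ω ^ (m * k) := by
    intro m
    rw [← hk, ← Units.val_pow_eq_pow_val, MulChar.pow_apply_coe, Units.val_pow_eq_pow_val,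
      map_pow, ← pow_mul, mul_comm k m]
  -- power criterion
  have hcrit : (∃ h : F, h ^ d = g) ↔ d ∣ k := by
    constructor
    · rintro ⟨h, hh⟩
      have hh0 : h ≠ 0 := by
        intro h0; rw [h0, zero_pow hd0] at hh; exact hg hh.symm
      obtain ⟨j, hj⟩ := mem_powers_iff_mem_zpowers.mpr (hz (Units.mk0 h hh0))
      have hj' : z ^ j = Units.mk0 h hh0 := hj
      have hval : (z : F) ^ j = h := by have := congrArg Units.val hj'; simpa using this
      have hzz : z ^ (j * d) = z ^ k := by
        refine Units.ext ?_
        push_cast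
        rw [pow_mul, hval, hh, hk]
      have hmod := pow_eq_pow_iff_modEq.mp hzz
      rw [hordz] at hmod
      have h1 : (n : ℤ) ∣ (k : ℤ) - ((j * d : ℕ) : ℤ) := hmod.dvd
      have h2 : (d : ℤ) ∣ (k : ℤ) - ((j * d : ℕ) : ℤ) :=
        dvd_trans (Int.natCast_dvd_natCast.mpr hd) h1
      have h4 : (d : ℤ) ∣ ((j * d : ℕ) : ℤ) := by push_cast; exact ⟨j, by ring⟩
      have h3 : (d : ℤ) ∣ (k : ℤ) := by
        have h5 := dvd_add h2 h4
        simpa using h5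
      exact_mod_cast h3
    · rintro ⟨j, hj⟩
      exact ⟨(z : F) ^ j, by rw [← pow_mul, mul_comm j d, ← hj, hk]⟩
  -- the image description of Xd
  have himg : Xd F d = (range d).image fun j => lam ^ (n / d * j) := by
    ext χ
    simp only [mem_Xd, mem_image, mem_range]
    constructor
    · intro hχ
      obtain ⟨m, hm⟩ := hgen χ
      have hm' : lam ^ m = χ := hm
      have hmd : lam ^ (m * d) = 1 := by rw [pow_mul, hm', hχ]
      have hdvd : n ∣ m * d := by
        have := orderOf_dvd_of_pow_eq_one hmd
        rwa [hord] at this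
      obtain ⟨t, ht⟩ : (n / d) ∣ m := by
        obtain ⟨u, hu⟩ := hdvd
        refine ⟨u, Nat.eq_of_mul_eq_mul_right (Nat.pos_of_ne_zero hd0) ?_⟩
        calc m * d = n * u := hu
          _ = n / d * d * u := by rw [hnd]
          _ = n / d * u * d := by ring
      refine ⟨t % d, Nat.mod_lt _ (Nat.pos_of_ne_zero hd0), ?_⟩
      rw [← hm', ht]
      have h2 : n / d * t = n * (t / d) + n / d * (t % d) := by
        have h3 := Nat.div_add_mod t d
        calc n / d * t = n / d * (d * (t / d) + t % d) := by rw [h3]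
          _ = n / d * d * (t / d) + n / d * (t % d) := by ring
          _ = n * (t / d) + n / d * (t % d) := by rw [hnd]
      rw [h2, pow_add, pow_mul lam n (t / d), hl1, one_pow, one_mul]
    · rintro ⟨j, _, rfl⟩
      have : n / d * j * d = n * j := by rw [mul_comm (n / d * j) d, ← mul_assoc, mul_comm d (n / d), hnd]
      rw [← pow_mul, this, pow_mul, hl1, one_pow]
  -- injectivity of the parametrization
  have hinj : Set.InjOn (fun j => lam ^ (n / d * j)) (range d) := by
    intro i hi j hj hij
    simp only [mem_coe, mem_range] at hi hj
    have hij' : lam ^ (n / d * i) = lam ^ (n / d * j) := hij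
    have hlt : ∀ {m : ℕ}, m < d → n / d * m < orderOf lam := by
      intro m hm
      rw [hord]
      calc n / d * m < n / d * d := by
            exact mul_lt_mul_of_pos_left hm (Nat.pos_of_ne_zero hnd0)
        _ = n := hnd
    have := pow_injOn_Iio_orderOf (Set.mem_Iio.mpr (hlt hi)) (Set.mem_Iio.mpr (hlt hj)) hij'
    exact Nat.eq_of_mul_eq_mul_left (Nat.pos_of_ne_zero hnd0) this
  rw [himg, Finset.sum_image fun i hi j hj h => hinj hi hj h]
  have hterm : ∀ j : ℕ, (lam ^ (n / d * j)) g = (ω ^ (n / d * k)) ^ j := by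
    intro j
    rw [heval, ← pow_mul]
    congr 1
    ring
  simp only [hterm]
  set u : ℂ := ω ^ (n / d * k) with hu
  have hud : u ^ d = 1 := by
    rw [hu, ← pow_mul]
    have : n / d * k * d = n * k := by rw [mul_comm (n / d * k) d, ← mul_assoc, mul_comm d (n / d), hnd]
    rw [this, pow_mul, hωn, one_pow]
  by_cases hdk : d ∣ k
  · obtain ⟨k', hk'⟩ := hdk
    have hu1 : u = 1 := by
      have h6 : n / d * k = n * k' := by rw [hk', ← mul_assoc, hnd]
      rw [hu, h6, pow_mul, hωn, one_pow]
    rw [if_pos (hcrit.mpr ⟨k', hk'⟩)]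
    simp [hu1]
  · have hu1 : u ≠ 1 := by
      intro h1
      apply hdk
      rw [hu] at h1
      have h2 : n ∣ n / d * k := by
        have h3 := orderOf_dvd_of_pow_eq_one h1
        rwa [hordω] at h3
      obtain ⟨t, ht⟩ := h2
      refine ⟨t, Nat.eq_of_mul_eq_mul_left (Nat.pos_of_ne_zero hnd0) ?_⟩
      calc n / d * k = n * t := ht
        _ = n / d * d * t := by rw [hnd]
        _ = n / d * (d * t) := by ring
    rw [geom_sum_eq hu1, hud]
    simp only [sub_self, zero_div]
    rw [if_neg (fun hc => hdk (hcrit.mp hc))]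

/-- Merging coprime power conditions. -/
lemma pow_exists_mul {d₁ d₂ : ℕ} (hco : Nat.Coprime d₁ d₂) (hd₁ : d₁ ≠ 0) (hd₂ : d₂ ≠ 0)
    {g : F} (hg : g ≠ 0) (h₁ : ∃ h : F, h ^ d₁ = g) (h₂ : ∃ h : F, h ^ d₂ = g) :
    ∃ h : F, h ^ (d₁ * d₂) = g := by
  obtain ⟨x, hx⟩ := h₁
  obtain ⟨y, hy⟩ := h₂
  have hx0 : x ≠ 0 := fun h0 => hg (by rw [← hx, h0, zero_pow hd₁])
  have hy0 : y ≠ 0 := fun h0 => hg (by rw [← hy, h0, zero_pow hd₂])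
  set gu : Fˣ := Units.mk0 g hg
  set xu : Fˣ := Units.mk0 x hx0
  set yu : Fˣ := Units.mk0 y hy0
  have hxu : xu ^ d₁ = gu := by ext; push_cast [gu, xu]; exact hx
  have hyu : yu ^ d₂ = gu := by ext; push_cast [gu, yu]; exact hy
  have hbez : (1 : ℤ) = d₁ * Nat.gcdA d₁ d₂ + d₂ * Nat.gcdB d₁ d₂ := by
    have := Nat.gcd_eq_gcd_ab d₁ d₂
    rwa [hco] at this
  set A := Nat.gcdA d₁ d₂
  set B := Nat.gcdB d₁ d₂
  set w : Fˣ := yu ^ A * xu ^ B with hw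
  have hkey : w ^ (d₁ * d₂) = gu := by
    have e1 : w ^ (d₁ * d₂) = (yu ^ (d₂ : ℤ)) ^ (A * d₁) * (xu ^ (d₁ : ℤ)) ^ (B * d₂) := by
      rw [hw, ← zpow_natCast (yu ^ A * xu ^ B) (d₁ * d₂), mul_zpow, ← zpow_mul, ← zpow_mul,
        ← zpow_mul, ← zpow_mul]
      push_cast
      ring_nf
    have e2 : yu ^ (d₂ : ℤ) = gu := by rw [zpow_natCast, hyu]
    have e3 : xu ^ (d₁ : ℤ) = gu := by rw [zpow_natCast, hxu]
    rw [e1, e2, e3, ← zpow_add]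
    have hexp : A * d₁ + B * d₂ = 1 := by rw [hbez]; ring
    rw [hexp, zpow_one]
  refine ⟨(w : F), ?_⟩
  have := congrArg Units.val hkey
  simpa [gu] using this

/-- A product of distinct primes power condition is equivalent to each prime separately. -/
lemma exists_pow_prod_iff {S : Finset ℕ} (hS : ∀ p ∈ S, Nat.Prime p) {g : F} (hg : g ≠ 0) :
    (∃ h : F, h ^ (∏ p ∈ S, p) = g) ↔ ∀ p ∈ S, ∃ h : F, h ^ p = g := by
  classical
  induction S using Finset.induction with
  | empty => simp
  | @insert a S ha IH =>
    have hap : Nat.Prime a := hS a (mem_insert_self a S)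
    have hSp : ∀ p ∈ S, Nat.Prime p := fun p hp => hS p (mem_insert_of_mem hp)
    have hprod0 : (∏ p ∈ S, p) ≠ 0 := by
      exact Finset.prod_ne_zero_iff.mpr fun p hp => (hSp p hp).ne_zero
    have hco : Nat.Coprime a (∏ p ∈ S, p) := by
      apply Nat.Coprime.prod_right
      intro p hp
      exact (Nat.coprime_primes hap (hSp p hp)).mpr (fun h => ha (h ▸ hp))
    rw [prod_insert ha]
    constructor
    · rintro ⟨h, hh⟩
      intro p hp
      rcases mem_insert.mp hp with rfl | hp'
      · exact ⟨h ^ (∏ p ∈ S, p), by rw [← pow_mul, mul_comm]; exact hh⟩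
      · have : ∃ h' : F, h' ^ (∏ p ∈ S, p) = g := ⟨h ^ a, by rw [← pow_mul]; exact hh⟩
        exact (IH hSp).mp this p hp'
    · intro hall
      refine pow_exists_mul hco hap.ne_zero hprod0 hg (hall a (mem_insert_self a S)) ?_
      exact (IH hSp).mpr fun p hp => hall p (mem_insert_of_mem hp)

/-- `e`-freeness is detected on the primes dividing `e`. -/
lemma isEFree_iff_primes {e : ℕ} (he : e ≠ 0) (g : F) :
    IsEFree e g ↔ g ≠ 0 ∧ ∀ p ∈ e.primeFactors, ¬∃ h : F, h ^ p = g := by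
  constructor
  · rintro ⟨hg, hfree⟩
    refine ⟨hg, fun p hp hex => ?_⟩
    have hpp := Nat.prime_of_mem_primeFactors hp
    exact hpp.ne_one (hfree p (Nat.dvd_of_mem_primeFactors hp) hex)
  · rintro ⟨hg, hnp⟩
    refine ⟨hg, fun d hd hex => ?_⟩
    by_contra hd1
    obtain ⟨p, hp, hpd⟩ := Nat.exists_prime_and_dvd hd1
    obtain ⟨h, hh⟩ := hex
    refine hnp p (Nat.mem_primeFactors.mpr ⟨hp, hpd.trans hd, he⟩) ?_
    obtain ⟨m, rfl⟩ := hpd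
    exact ⟨h ^ m, by rw [← pow_mul, mul_comm]; exact hh⟩

/-- The real coefficient of the character `χ` in the `e`-free indicator. -/
noncomputable def ce (e : ℕ) (χ : MulChar F ℂ) : ℝ :=
  ∑ S ∈ e.primeFactors.powerset,
    (if χ ^ (∏ p ∈ S, p) = 1 then ∏ p ∈ S, (-1 / (p : ℝ)) else 0)

/-- The indicator of being `e`-free, as a character sum. -/
lemma indicator_eq_sum_ce {e : ℕ} (he : e ∣ Fintype.card F - 1) {g : F} (hg : g ≠ 0) :
    (if IsEFree e g then (1 : ℂ) else 0) = ∑ χ : MulChar F ℂ, (ce e χ : ℂ) * χ g := by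
  classical
  have hn0 : Fintype.card F - 1 ≠ 0 := by
    have : 2 ≤ Fintype.card F := Fintype.one_lt_card
    omega
  have he0 : e ≠ 0 := fun h => hn0 (by simpa [h] using he)
  have hprodS : ∀ S ∈ e.primeFactors.powerset, (∏ p ∈ S, p) ∣ Fintype.card F - 1 := by
    intro S hS
    have h1 : (∏ p ∈ S, p) ∣ ∏ p ∈ e.primeFactors, p :=
      Finset.prod_dvd_prod_of_subset _ _ _ (mem_powerset.mp hS)
    exact h1.trans ((Nat.prod_primeFactors_dvd e).trans he)
  have hSprime : ∀ S ∈ e.primeFactors.powerset, ∀ p ∈ S, Nat.Prime p := by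
    intro S hS p hp
    exact Nat.prime_of_mem_primeFactors (mem_powerset.mp hS hp)
  -- RHS computation
  have hrhs : ∑ χ : MulChar F ℂ, (ce e χ : ℂ) * χ g =
      ∑ S ∈ e.primeFactors.powerset,
        (if ∃ h : F, h ^ (∏ p ∈ S, p) = g then (-1 : ℂ) ^ S.card else 0) := by
    have step1 : ∀ χ : MulChar F ℂ, (ce e χ : ℂ) * χ g =
        ∑ S ∈ e.primeFactors.powerset,
          (if χ ^ (∏ p ∈ S, p) = 1 then (∏ p ∈ S, (-1 / (p : ℂ))) * χ g else 0) := by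
      intro χ
      rw [ce]
      push_cast
      rw [Finset.sum_mul]
      refine Finset.sum_congr rfl fun S hS => ?_
      split_ifs <;> simp
    simp only [step1]
    rw [Finset.sum_comm]
    refine Finset.sum_congr rfl fun S hS => ?_
    have : ∑ χ : MulChar F ℂ, (if χ ^ (∏ p ∈ S, p) = 1 then (∏ p ∈ S, (-1 / (p : ℂ))) * χ g else 0)
        = (∏ p ∈ S, (-1 / (p : ℂ))) * ∑ χ ∈ Xd F (∏ p ∈ S, p), χ g := by
      rw [Finset.mul_sum, ← Finset.sum_filter]
      rfl
    rw [this, sum_Xd (hprodS S hS) hg]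
    have hprodne : ∀ p ∈ S, ((p : ℂ)) ≠ 0 := fun p hp =>
      Nat.cast_ne_zero.mpr (hSprime S hS p hp).ne_zero
    split_ifs with hpow
    · push_cast
      rw [← Finset.prod_mul_distrib]
      have hpr : ∏ p ∈ S, (-1 / (p:ℂ) * p) = ∏ _p ∈ S, (-1 : ℂ) := by
        refine Finset.prod_congr rfl fun p hp => ?_
        have := hprodne p hp
        field_simp
      rw [hpr]
      simp
    · rw [mul_zero]
  rw [hrhs]
  -- LHS computation
  have hlhs : (if IsEFree e g then (1 : ℂ) else 0) =
      ∏ p ∈ e.primeFactors, (1 - if ∃ h : F, h ^ p = g then (1:ℂ) else 0) := by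
    by_cases hfree : IsEFree e g
    · rw [if_pos hfree]
      have h2 := ((isEFree_iff_primes he0 g).mp hfree).2
      symm
      refine Finset.prod_eq_one fun p hp => ?_
      rw [if_neg (h2 p hp), sub_zero]
    · rw [if_neg hfree]
      have h2 : ∃ p ∈ e.primeFactors, ∃ h : F, h ^ p = g := by
        by_contra hcon
        push_neg at hcon
        refine hfree ((isEFree_iff_primes he0 g).mpr ⟨hg, fun p hp hex => ?_⟩)
        obtain ⟨h, hh⟩ := hex
        exact hcon p hp h hh
      obtain ⟨p, hp, hpe⟩ := h2
      symm
      apply Finset.prod_eq_zero hp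
      rw [if_pos hpe, sub_self]
  rw [hlhs]
  have hre : ∀ p : ℕ, (1 - if ∃ h : F, h ^ p = g then (1:ℂ) else 0)
      = (-(if ∃ h : F, h ^ p = g then (1:ℂ) else 0)) + 1 := fun p => by ring
  simp only [hre]
  rw [Finset.prod_add]
  refine Finset.sum_congr rfl fun S hS => ?_
  rw [Finset.prod_const_one, mul_one]
  have hSp := hSprime S hS
  have h3 : ∏ p ∈ S, (-(if ∃ h : F, h ^ p = g then (1:ℂ) else 0))
      = (-1 : ℂ) ^ S.card * ∏ p ∈ S, (if ∃ h : F, h ^ p = g then (1:ℂ) else 0) := by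
    rw [← Finset.prod_const (-1 : ℂ), ← Finset.prod_mul_distrib]
    exact Finset.prod_congr rfl fun p hp => by ring
  rw [h3, Finset.prod_boole]
  have h4 : (∀ p ∈ S, ∃ h : F, h ^ p = g) ↔ (∃ h : F, h ^ (∏ p ∈ S, p) = g) :=
    (exists_pow_prod_iff hSp hg).symm
  by_cases h5 : ∃ h : F, h ^ (∏ p ∈ S, p) = g
  · rw [if_pos h5, if_pos (h4.mpr h5), mul_one]
  · rw [if_neg h5, if_neg (fun hc => h5 (h4.mp hc)), mul_zero]

lemma norm_mulChar_eq_one (χ : MulChar F ℂ) {g : F} (hg : g ≠ 0) : ‖χ g‖ = 1 := by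
  have h1 : (χ g) ^ (Fintype.card F - 1) = 1 := by
    rw [← map_pow, FiniteField.pow_card_sub_one_eq_one g hg, map_one]
  refine Complex.norm_eq_one_of_pow_eq_one h1 ?_
  have : 2 ≤ Fintype.card F := Fintype.one_lt_card
  omega

lemma conj_mulChar (χ : MulChar F ℂ) (g : F) : (starRingEnd ℂ) (χ g) = χ⁻¹ g := by
  by_cases hg : g = 0
  · rw [hg, χ.map_zero, (χ⁻¹).map_zero, map_zero]
  · rw [MulChar.inv_apply_eq_inv, Ring.inverse_eq_inv',
      ← Complex.inv_eq_conj (norm_mulChar_eq_one χ hg)]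

lemma conj_addChar (ψ : AddChar F ℂ) (x : F) : (starRingEnd ℂ) (ψ x) = ψ⁻¹ x := by
  have h1 : (ψ x) ^ (Fintype.card F) = 1 := by
    rw [← AddChar.mulShift_spec', AddChar.mulShift_apply]
    have : ((Fintype.card F : ℕ) : F) = 0 := by
      exact_mod_cast FiniteField.cast_card_eq_zero F
    rw [this, zero_mul, AddChar.map_zero_eq_one]
  have h2 : ‖ψ x‖ = 1 := Complex.norm_eq_one_of_pow_eq_one h1 Fintype.card_ne_zero
  rw [AddChar.inv_apply', ← Complex.inv_eq_conj h2]

lemma exists_primitive_addChar : ∃ ψ : AddChar F ℂ, ψ.IsPrimitive := by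
  obtain ⟨ψ, hψ⟩ := AddChar.exists_apply_ne_zero.mpr (one_ne_zero : (1 : F) ≠ 0)
  refine ⟨ψ, AddChar.IsPrimitive.of_ne_one fun h => hψ ?_⟩
  rw [h, AddChar.one_apply]

lemma norm_gaussSum {χ : MulChar F ℂ} (hχ : χ ≠ 1) {ψ : AddChar F ℂ} (hψ : ψ.IsPrimitive) :
    ‖gaussSum χ ψ‖ = Real.sqrt (Fintype.card F) := by
  have h1 : gaussSum χ⁻¹ ψ⁻¹ = (starRingEnd ℂ) (gaussSum χ ψ) := by
    rw [gaussSum, gaussSum, map_sum]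
    exact Finset.sum_congr rfl fun x _ => by rw [map_mul, conj_mulChar, conj_addChar]
  have h2 := gaussSum_mul_gaussSum_eq_card hχ hψ
  rw [h1, Complex.mul_conj] at h2
  have h3 : Complex.normSq (gaussSum χ ψ) = (Fintype.card F : ℝ) := by exact_mod_cast h2
  have h4 : ‖gaussSum χ ψ‖ ^ 2 = (Fintype.card F : ℝ) := by
    rw [Complex.sq_norm]; exact h3
  rw [← h4, Real.sqrt_sq (norm_nonneg _)]

lemma norm_jacobiSum {χ₁ χ₂ : MulChar F ℂ} (h₁ : χ₁ ≠ 1) (h₂ : χ₂ ≠ 1) (h12 : χ₁ * χ₂ ≠ 1) :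
    ‖jacobiSum χ₁ χ₂‖ = Real.sqrt (Fintype.card F) := by
  obtain ⟨ψ, hψ⟩ := exists_primitive_addChar (F := F)
  have h3 := jacobiSum_mul_nontrivial h12 ψ
  have h4 := congrArg norm h3
  rw [norm_mul, norm_mul, norm_gaussSum h₁ hψ, norm_gaussSum h₂ hψ, norm_gaussSum h12 hψ] at h4
  have hs0 : Real.sqrt (Fintype.card F) ≠ 0 := by
    have : (0:ℝ) < Fintype.card F := by exact_mod_cast Fintype.card_pos
    positivity
  exact mul_left_cancel₀ hs0 h4

variable (a c : F)

/-- The complete character sum appearing in the expansion of `Ncnt`. -/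
noncomputable def Tsum (χ₁ χ₂ : MulChar F ℂ) : ℂ :=
  ∑ g ∈ (univ : Finset F) \ {0, a * c⁻¹}, χ₁ g * χ₂ (a - c * g)

variable {a c}

lemma sub_ne_zero_iff' (hc : c ≠ 0) {g : F} : a - c * g = 0 ↔ g = a * c⁻¹ := by
  rw [sub_eq_zero]
  constructor
  · intro h; rw [h, mul_comm c g, mul_assoc, mul_inv_cancel₀ hc, mul_one]
  · intro h; rw [h]; field_simp

lemma mem_D (hc : c ≠ 0) {g : F} :
    g ∈ (univ : Finset F) \ {0, a * c⁻¹} ↔ g ≠ 0 ∧ a - c * g ≠ 0 := by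
  simp only [mem_sdiff, mem_univ, true_and, mem_insert, mem_singleton, not_or]
  rw [← sub_ne_zero_iff' hc]

lemma card_D (ha : a ≠ 0) (hc : c ≠ 0) :
    ((univ : Finset F) \ {0, a * c⁻¹}).card = Fintype.card F - 2 := by
  have h0 : (0 : F) ∉ ({a * c⁻¹} : Finset F) := by
    simp only [mem_singleton]
    intro h
    rcases mul_eq_zero.mp h.symm with h' | h'
    · exact ha h'
    · exact inv_ne_zero hc h'
  rw [Finset.card_sdiff_of_subset (subset_univ _), Finset.card_univ,
    Finset.card_insert_of_notMem h0, Finset.card_singleton]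

lemma Tsum_one_one (ha : a ≠ 0) (hc : c ≠ 0) :
    Tsum a c 1 1 = (Fintype.card F : ℂ) - 2 := by
  rw [Tsum]
  have : ∀ g ∈ (univ : Finset F) \ {0, a * c⁻¹},
      (1 : MulChar F ℂ) g * (1 : MulChar F ℂ) (a - c * g) = 1 := by
    intro g hg
    obtain ⟨hg0, hg1⟩ := (mem_D hc).mp hg
    rw [MulChar.one_apply hg0.isUnit, MulChar.one_apply hg1.isUnit, one_mul]
  rw [Finset.sum_congr rfl this, Finset.sum_const, card_D ha hc, nsmul_eq_mul, mul_one]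
  have h2 : 2 ≤ Fintype.card F := Fintype.one_lt_card
  rw [Nat.cast_sub h2]
  norm_num

lemma Tsum_one_right (ha : a ≠ 0) (hc : c ≠ 0) {χ₁ : MulChar F ℂ} (h₁ : χ₁ ≠ 1) :
    Tsum a c χ₁ 1 = -χ₁ (a * c⁻¹) := by
  rw [Tsum]
  have hu0 : a * c⁻¹ ≠ 0 := by
    apply mul_ne_zero ha (inv_ne_zero hc)
  have : ∀ g ∈ (univ : Finset F) \ {0, a * c⁻¹},
      χ₁ g * (1 : MulChar F ℂ) (a - c * g) = χ₁ g := by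
    intro g hg
    rw [MulChar.one_apply ((mem_D hc).mp hg).2.isUnit, mul_one]
  rw [Finset.sum_congr rfl this, Finset.sum_sdiff_eq_sub (subset_univ _),
    MulChar.sum_eq_zero_of_ne_one h₁, Finset.sum_insert (by simp [Ne.symm hu0]),
    Finset.sum_singleton, χ₁.map_zero]
  ring

lemma Tsum_one_left (ha : a ≠ 0) (hc : c ≠ 0) {χ₂ : MulChar F ℂ} (h₂ : χ₂ ≠ 1) :
    Tsum a c 1 χ₂ = -χ₂ a := by
  rw [Tsum]
  have hu0 : a * c⁻¹ ≠ 0 := mul_ne_zero ha (inv_ne_zero hc)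
  have h1 : ∀ g ∈ (univ : Finset F) \ {0, a * c⁻¹},
      (1 : MulChar F ℂ) g * χ₂ (a - c * g) = χ₂ (a - c * g) := by
    intro g hg
    rw [MulChar.one_apply ((mem_D hc).mp hg).1.isUnit, one_mul]
  rw [Finset.sum_congr rfl h1]
  -- reindex by v = a - c * g
  have h2 : ∑ g ∈ (univ : Finset F) \ {0, a * c⁻¹}, χ₂ (a - c * g)
      = ∑ v ∈ (univ : Finset F) \ {a, 0}, χ₂ v := by
    refine Finset.sum_nbij' (fun g => a - c * g) (fun v => (a - v) * c⁻¹) ?_ ?_ ?_ ?_ ?_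
    · intro g hg
      obtain ⟨hg0, hg1⟩ := (mem_D hc).mp hg
      simp only [mem_sdiff, mem_univ, true_and, mem_insert, mem_singleton, not_or]
      constructor
      · intro h
        apply hg0
        have : c * g = 0 := by linear_combination -h
        rcases mul_eq_zero.mp this with h' | h'
        · exact absurd h' hc
        · exact h'
      · exact hg1
    · intro v hv
      simp only [mem_sdiff, mem_univ, true_and, mem_insert, mem_singleton, not_or] at hv
      rw [mem_D hc]
      constructor
      · intro h
        apply hv.1
        have : a - v = 0 := by
          rcases mul_eq_zero.mp h with h' | h'
          · exact h'
          · exact absurd h' (inv_ne_zero hc)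
        exact (sub_eq_zero.mp this).symm
      · intro h
        apply hv.2
        have : c * ((a - v) * c⁻¹) = a - v := by field_simp
        rw [this] at h
        linear_combination h
    · intro g _
      rw [show a - (a - c * g) = c * g by ring, mul_comm c g, mul_assoc,
        mul_inv_cancel₀ hc, mul_one]
    · intro v _
      rw [show c * ((a - v) * c⁻¹) = a - v by field_simp]
      ring
    · intro g _; rfl
  rw [h2, Finset.sum_sdiff_eq_sub (subset_univ _), MulChar.sum_eq_zero_of_ne_one h₂,
    Finset.sum_insert (by simp [ha]), Finset.sum_singleton, χ₂.map_zero]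
  ring

lemma Tsum_eq_jacobi (ha : a ≠ 0) (hc : c ≠ 0) {χ₁ χ₂ : MulChar F ℂ} (h₁ : χ₁ ≠ 1)
    (h₂ : χ₂ ≠ 1) :
    Tsum a c χ₁ χ₂ = χ₁ (a * c⁻¹) * χ₂ a * jacobiSum χ₁ χ₂ := by
  classical
  set u : F := a * c⁻¹ with hu
  have hu0 : u ≠ 0 := mul_ne_zero ha (inv_ne_zero hc)
  have hcu : c * u = a := by rw [hu]; field_simp
  rw [Tsum, jacobiSum_eq_sum_sdiff]
  have h3 : ∑ g ∈ (univ : Finset F) \ {0, u}, χ₁ g * χ₂ (a - c * g)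
      = ∑ t ∈ (univ : Finset F) \ {0, 1}, χ₁ (u * t) * χ₂ (a - c * (u * t)) := by
    refine (Finset.sum_nbij' (fun t => u * t) (fun g => u⁻¹ * g) ?_ ?_ ?_ ?_ ?_).symm
    · intro t ht
      simp only [mem_sdiff, mem_univ, true_and, mem_insert, mem_singleton, not_or] at ht ⊢
      constructor
      · exact mul_ne_zero hu0 ht.1
      · intro hcon
        exact ht.2 (by
          have := congrArg (u⁻¹ * ·) hcon
          simpa [← mul_assoc, inv_mul_cancel₀ hu0] using this)
    · intro g hg
      simp only [mem_sdiff, mem_univ, true_and, mem_insert, mem_singleton, not_or] at hg ⊢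
      constructor
      · exact mul_ne_zero (inv_ne_zero hu0) hg.1
      · intro hcon
        apply hg.2
        have := congrArg (u * ·) hcon
        simpa [← mul_assoc, mul_inv_cancel₀ hu0] using this
    · intro t _
      rw [← mul_assoc, inv_mul_cancel₀ hu0, one_mul]
    · intro g _
      rw [← mul_assoc, mul_inv_cancel₀ hu0, one_mul]
    · intro t _; rfl
  rw [h3, Finset.mul_sum]
  refine Finset.sum_congr rfl fun t ht => ?_
  have h4 : a - c * (u * t) = a * (1 - t) := by
    rw [← mul_assoc, hcu]; ring
  rw [h4, map_mul χ₁ u t, map_mul χ₂ a (1 - t)]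
  ring

lemma norm_Tsum_le (ha : a ≠ 0) (hc : c ≠ 0) {χ₁ χ₂ : MulChar F ℂ}
    (h : ¬(χ₁ = 1 ∧ χ₂ = 1)) :
    ‖Tsum a c χ₁ χ₂‖ ≤ Real.sqrt (Fintype.card F) := by
  have hq1 : (1 : ℝ) ≤ Real.sqrt (Fintype.card F) := by
    rw [Real.one_le_sqrt]
    exact_mod_cast Fintype.card_pos
  by_cases h₁ : χ₁ = 1
  · by_cases h₂ : χ₂ = 1
    · exact absurd ⟨h₁, h₂⟩ h
    · rw [h₁, Tsum_one_left ha hc h₂, norm_neg, norm_mulChar_eq_one _ ha]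
      exact hq1
  · by_cases h₂ : χ₂ = 1
    · rw [h₂, Tsum_one_right ha hc h₁, norm_neg,
        norm_mulChar_eq_one _ (mul_ne_zero ha (inv_ne_zero hc))]
      exact hq1
    · rw [Tsum_eq_jacobi ha hc h₁ h₂, norm_mul, norm_mul,
        norm_mulChar_eq_one _ (mul_ne_zero ha (inv_ne_zero hc)), norm_mulChar_eq_one _ ha,
        one_mul, one_mul]
      by_cases h12 : χ₁ * χ₂ = 1
      · have hinv : χ₂ = χ₁⁻¹ := (inv_eq_of_mul_eq_one_right h12).symm
        rw [hinv, jacobiSum_nontrivial_inv h₁, norm_neg,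
          norm_mulChar_eq_one _ (neg_ne_zero.mpr (one_ne_zero : (1:F) ≠ 0))]
        exact hq1
      · rw [norm_jacobiSum h₁ h₂ h12]

/-- Expansion of `Ncnt` as a double character sum. -/
lemma Ncnt_eq (ha : a ≠ 0) (hc : c ≠ 0) {e₁ e₂ : ℕ} (h₁ : e₁ ∣ Fintype.card F - 1)
    (h₂ : e₂ ∣ Fintype.card F - 1) :
    (Ncnt a c e₁ e₂ : ℂ) =
      ∑ χ₁ : MulChar F ℂ, ∑ χ₂ : MulChar F ℂ,
        (ce e₁ χ₁ : ℂ) * (ce e₂ χ₂ : ℂ) * Tsum a c χ₁ χ₂ := by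
  classical
  set D := (univ : Finset F) \ {0, a * c⁻¹} with hD
  have hNcnt : Ncnt a c e₁ e₂
      = (D.filter fun g => IsEFree e₁ g ∧ IsEFree e₂ (a - c * g)).card := by
    rw [Ncnt, Set.ncard_eq_toFinset_card', Set.toFinset_setOf]
    congr 1
    ext g
    simp only [Finset.mem_filter, mem_univ, true_and, hD]
    constructor
    · rintro ⟨hf₁, hf₂⟩
      exact ⟨(mem_D hc).mpr ⟨hf₁.1, hf₂.1⟩, hf₁, hf₂⟩
    · rintro ⟨_, hf₁, hf₂⟩
      exact ⟨hf₁, hf₂⟩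
  rw [hNcnt, Finset.card_filter]
  rw [Nat.cast_sum]
  have hp1 : ∀ g ∈ D, ((if IsEFree e₁ g ∧ IsEFree e₂ (a - c * g) then 1 else 0 : ℕ) : ℂ)
      = (∑ χ₁ : MulChar F ℂ, (ce e₁ χ₁ : ℂ) * χ₁ g)
        * (∑ χ₂ : MulChar F ℂ, (ce e₂ χ₂ : ℂ) * χ₂ (a - c * g)) := by
    intro g hg
    obtain ⟨hg0, hg1⟩ := (mem_D hc).mp hg
    rw [← indicator_eq_sum_ce h₁ hg0, ← indicator_eq_sum_ce h₂ hg1]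
    by_cases hf₁ : IsEFree e₁ g <;> by_cases hf₂ : IsEFree e₂ (a - c * g) <;>
      simp [hf₁, hf₂]
  rw [Finset.sum_congr rfl hp1]
  simp_rw [Finset.sum_mul_sum]
  rw [Finset.sum_comm]
  refine Finset.sum_congr rfl fun χ₁ _ => ?_
  rw [Finset.sum_comm]
  refine Finset.sum_congr rfl fun χ₂ _ => ?_
  rw [Tsum, Finset.mul_sum]
  exact Finset.sum_congr rfl fun g _ => by ring

lemma coprime_prod_primes {a : ℕ} (ha : Nat.Prime a) {S : Finset ℕ}
    (hS : ∀ p ∈ S, Nat.Prime p) (haS : a ∉ S) : Nat.Coprime a (∏ p ∈ S, p) := by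
  apply Nat.Coprime.prod_right
  intro p hp
  exact (Nat.coprime_primes ha (hS p hp)).mpr (fun h => haS (h ▸ hp))

lemma squarefree_prod_primes {S : Finset ℕ} (hS : ∀ p ∈ S, Nat.Prime p) :
    Squarefree (∏ p ∈ S, p) := by
  classical
  induction S using Finset.induction with
  | empty => simpa using squarefree_one
  | @insert a S ha IH =>
    rw [prod_insert ha]
    rw [Nat.squarefree_mul_iff]
    refine ⟨coprime_prod_primes (hS a (mem_insert_self a S))
        (fun p hp => hS p (mem_insert_of_mem hp)) ha,
      (hS a (mem_insert_self a S)).squarefree,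
      IH fun p hp => hS p (mem_insert_of_mem hp)⟩

lemma dvd_prod_primes_iff {S : Finset ℕ} (hS : ∀ p ∈ S, Nat.Prime p) (m : ℕ) :
    m ∣ ∏ p ∈ S, p ↔ Squarefree m ∧ m.primeFactors ⊆ S := by
  constructor
  · intro h
    have hsq := (squarefree_prod_primes hS).squarefree_of_dvd h
    refine ⟨hsq, ?_⟩
    have h2 := Nat.primeFactors_mono h (squarefree_prod_primes hS).ne_zero
    rwa [Nat.primeFactors_prod hS] at h2
  · rintro ⟨hsq, hsub⟩
    calc m = ∏ p ∈ m.primeFactors, p := (Nat.prod_primeFactors_of_squarefree hsq).symm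
      _ ∣ ∏ p ∈ S, p := Finset.prod_dvd_prod_of_subset _ _ _ hsub

/-- Explicit value of the coefficient `ce e χ`. -/
lemma ce_eq (e : ℕ) (χ : MulChar F ℂ) :
    ce e χ = if Squarefree (orderOf χ) ∧ (orderOf χ).primeFactors ⊆ e.primeFactors
      then (∏ p ∈ (orderOf χ).primeFactors, (-1 / (p : ℝ))) *
           (∏ p ∈ e.primeFactors \ (orderOf χ).primeFactors, (1 - 1 / (p : ℝ)))
      else 0 := by
  classical
  set m := orderOf χ with hm
  set B := m.primeFactors with hB
  set A := e.primeFactors with hA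
  have hAp : ∀ p ∈ A, Nat.Prime p := fun p hp => Nat.prime_of_mem_primeFactors hp
  have hterm : ∀ S ∈ A.powerset, ((if χ ^ (∏ p ∈ S, p) = 1 then ∏ p ∈ S, (-1 / (p : ℝ)) else 0)
      = if Squarefree m ∧ B ⊆ S then ∏ p ∈ S, (-1 / (p : ℝ)) else 0) := by
    intro S hS
    have hSp : ∀ p ∈ S, Nat.Prime p := fun p hp => hAp p (mem_powerset.mp hS hp)
    have : χ ^ (∏ p ∈ S, p) = 1 ↔ (Squarefree m ∧ B ⊆ S) := by
      rw [← orderOf_dvd_iff_pow_eq_one, ← hm, dvd_prod_primes_iff hSp, ← hB]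
    simp only [this]
  rw [ce, Finset.sum_congr rfl hterm]
  by_cases hcond : Squarefree m ∧ B ⊆ A
  · rw [if_pos hcond]
    have hsum : ∑ S ∈ A.powerset, (if Squarefree m ∧ B ⊆ S then ∏ p ∈ S, (-1 / (p : ℝ)) else 0)
        = ∑ S ∈ A.powerset.filter (fun S => B ⊆ S), ∏ p ∈ S, (-1 / (p : ℝ)) := by
      rw [Finset.sum_filter]
      exact Finset.sum_congr rfl fun S _ => by simp [hcond.1]
    rw [hsum]
    have hbij : ∑ S ∈ A.powerset.filter (fun S => B ⊆ S), ∏ p ∈ S, (-1 / (p : ℝ))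
        = ∑ S' ∈ (A \ B).powerset, (∏ p ∈ B, (-1 / (p : ℝ))) * ∏ p ∈ S', (-1 / (p : ℝ)) := by
      refine Finset.sum_nbij' (fun S => S \ B) (fun S' => S' ∪ B) ?_ ?_ ?_ ?_ ?_
      · intro S hS
        simp only [Finset.mem_filter, mem_powerset] at hS
        rw [mem_powerset]
        exact Finset.sdiff_subset_sdiff hS.1 (le_refl B)
      · intro S' hS'
        rw [mem_powerset] at hS'
        simp only [Finset.mem_filter, mem_powerset]
        exact ⟨Finset.union_subset (hS'.trans Finset.sdiff_subset) hcond.2,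
          Finset.subset_union_right⟩
      · intro S hS
        simp only [Finset.mem_filter, mem_powerset] at hS
        rw [Finset.sdiff_union_of_subset hS.2]
      · intro S' hS'
        rw [mem_powerset] at hS'
        rw [Finset.union_sdiff_cancel_right
          (Finset.disjoint_of_subset_left hS' Finset.sdiff_disjoint)]
      · intro S hS
        simp only [Finset.mem_filter, mem_powerset] at hS
        rw [← Finset.prod_sdiff hS.2]
        ring
    rw [hbij, ← Finset.mul_sum]
    congr 1
    have hpa := Finset.prod_add (fun p : ℕ => (-1 / (p : ℝ))) (fun _ : ℕ => (1 : ℝ)) (A \ B)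
    simp only [Finset.prod_const_one, mul_one] at hpa
    rw [← hpa]
    exact Finset.prod_congr rfl fun p hp => by ring
  · rw [if_neg hcond]
    apply Finset.sum_eq_zero
    intro S hS
    rw [if_neg]
    intro ⟨hsq, hsub⟩
    exact hcond ⟨hsq, hsub.trans (mem_powerset.mp hS)⟩

lemma prod_sub_nonneg {A : Finset ℕ} (hA : ∀ p ∈ A, Nat.Prime p) :
    0 ≤ ∏ p ∈ A, (1 - 1 / (p : ℝ)) := by
  apply Finset.prod_nonneg
  intro p hp
  have h1 : (1 : ℝ) ≤ p := by exact_mod_cast (hA p hp).one_lt.le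
  have h2 : 1 / (p : ℝ) ≤ 1 := by
    rw [div_le_one (by linarith)]; exact h1
  linarith

lemma thetaFn_nonneg (e : ℕ) : 0 ≤ thetaFn e :=
  prod_sub_nonneg fun p hp => Nat.prime_of_mem_primeFactors hp

lemma ce_one (e : ℕ) : ce e (1 : MulChar F ℂ) = thetaFn e := by
  rw [ce_eq, orderOf_one]
  rw [if_pos ⟨squarefree_one, by simp⟩]
  simp [thetaFn]

lemma abs_ce (e : ℕ) (χ : MulChar F ℂ) :
    |ce e χ| = if Squarefree (orderOf χ) ∧ (orderOf χ).primeFactors ⊆ e.primeFactors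
      then (1 / (orderOf χ : ℝ)) *
        (∏ p ∈ e.primeFactors \ (orderOf χ).primeFactors, (1 - 1 / (p : ℝ)))
      else 0 := by
  rw [ce_eq]
  split_ifs with h
  · rw [abs_mul]
    congr 1
    · rw [Finset.abs_prod]
      have h1 : ∀ p ∈ (orderOf χ).primeFactors, |(-1 / (p : ℝ))| = 1 / (p : ℝ) := by
        intro p hp
        rw [abs_div, abs_neg, abs_one, Nat.abs_cast]
      rw [Finset.prod_congr rfl h1, Finset.prod_div_distrib, Finset.prod_const_one]
      congr 1
      rw [← Nat.cast_prod, Nat.prod_primeFactors_of_squarefree h.1]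
    · refine abs_of_nonneg (prod_sub_nonneg fun p hp => ?_)
      exact Nat.prime_of_mem_primeFactors (Finset.mem_sdiff.mp hp).1
  · simp

lemma totient_cast (d : ℕ) :
    (Nat.totient d : ℝ) = d * ∏ p ∈ d.primeFactors, (1 - 1 / (p : ℝ)) := by
  have h := Nat.totient_eq_mul_prod_factors d
  have h2 := congrArg (fun q : ℚ => (q : ℝ)) h
  push_cast at h2
  simpa [one_div] using h2

lemma card_divisors_prod_primes {A : Finset ℕ} (hA : ∀ p ∈ A, Nat.Prime p) :
    (∏ p ∈ A, p).divisors.card = 2 ^ A.card := by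
  classical
  rw [← Finset.card_powerset]
  have hsq := squarefree_prod_primes hA
  have hr0 : (∏ p ∈ A, p) ≠ 0 := hsq.ne_zero
  refine Finset.card_nbij' (fun d => d.primeFactors) (fun S => ∏ p ∈ S, p) ?_ ?_ ?_ ?_
  · intro d hd
    obtain ⟨hdr, _⟩ := Nat.mem_divisors.mp hd
    rw [Finset.mem_coe, mem_powerset]
    have := Nat.primeFactors_mono hdr hr0
    rwa [Nat.primeFactors_prod hA] at this
  · intro S hS
    rw [Finset.mem_coe, mem_powerset] at hS
    exact Nat.mem_divisors.mpr ⟨Finset.prod_dvd_prod_of_subset _ _ _ hS, hr0⟩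
  · intro d hd
    obtain ⟨hdr, _⟩ := Nat.mem_divisors.mp hd
    simp only []
    exact Nat.prod_primeFactors_of_squarefree (hsq.squarefree_of_dvd hdr)
  · intro S hS
    rw [Finset.mem_coe, mem_powerset] at hS
    simp only []
    exact Nat.primeFactors_prod fun p hp => hA p (hS hp)

/-- The total mass of the coefficients: `∑ |ce e χ| = θ(e) W(e)`. -/
lemma sum_abs_ce {e : ℕ} (hed : e ∣ Fintype.card F - 1) :
    ∑ χ : MulChar F ℂ, |ce e χ| = thetaFn e * (Wfn e : ℝ) := by
  classical
  haveI : IsCyclic (MulChar F ℂ) := isCyclic_mulChar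
  set A := e.primeFactors with hA
  have hAp : ∀ p ∈ A, Nat.Prime p := fun p hp => Nat.prime_of_mem_primeFactors hp
  set r := ∏ p ∈ A, p with hr
  have hrsq : Squarefree r := squarefree_prod_primes hAp
  have hr0 : r ≠ 0 := hrsq.ne_zero
  have hn0 : Fintype.card F - 1 ≠ 0 := by
    have : 2 ≤ Fintype.card F := Fintype.one_lt_card
    omega
  have hrn : r ∣ Fintype.card F - 1 := (Nat.prod_primeFactors_dvd e).trans hed
  have hcond : ∀ χ : MulChar F ℂ,
      (Squarefree (orderOf χ) ∧ (orderOf χ).primeFactors ⊆ A) ↔ orderOf χ ∣ r :=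
    fun χ => (dvd_prod_primes_iff hAp _).symm
  rw [← Finset.sum_filter_add_sum_filter_not univ (fun χ => orderOf χ ∣ r)]
  have hzero : ∑ χ ∈ univ.filter (fun χ : MulChar F ℂ => ¬ orderOf χ ∣ r), |ce e χ| = 0 := by
    apply Finset.sum_eq_zero
    intro χ hχ
    rw [Finset.mem_filter] at hχ
    rw [abs_ce, if_neg (fun hc => hχ.2 ((hcond χ).mp hc))]
  rw [hzero, add_zero]
  have hmaps : ∀ χ ∈ univ.filter (fun χ : MulChar F ℂ => orderOf χ ∣ r),
      orderOf χ ∈ r.divisors := by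
    intro χ hχ
    rw [Finset.mem_filter] at hχ
    exact Nat.mem_divisors.mpr ⟨hχ.2, hr0⟩
  rw [← Finset.sum_fiberwise_of_maps_to hmaps]
  have hfiber : ∀ d ∈ r.divisors,
      (∑ χ ∈ (univ.filter (fun χ : MulChar F ℂ => orderOf χ ∣ r)).filter
          (fun χ => orderOf χ = d), |ce e χ|) = thetaFn e := by
    intro d hd
    obtain ⟨hdr, _⟩ := Nat.mem_divisors.mp hd
    have hd0 : d ≠ 0 := fun h => hr0 (by simpa [h] using hdr)
    have hdsq : Squarefree d := hrsq.squarefree_of_dvd hdr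
    have hPFd : d.primeFactors ⊆ A := by
      have := Nat.primeFactors_mono hdr hr0
      rwa [hr, Nat.primeFactors_prod hAp] at this
    have hval : ∀ χ ∈ (univ.filter (fun χ : MulChar F ℂ => orderOf χ ∣ r)).filter
        (fun χ => orderOf χ = d),
        |ce e χ| = (1 / (d : ℝ)) * ∏ p ∈ A \ d.primeFactors, (1 - 1 / (p : ℝ)) := by
      intro χ hχ
      simp only [Finset.mem_filter] at hχ
      rw [abs_ce, hχ.2, if_pos ⟨hdsq, hPFd⟩]
    rw [Finset.sum_congr rfl hval, Finset.sum_const, nsmul_eq_mul]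
    have hcard : ((univ.filter (fun χ : MulChar F ℂ => orderOf χ ∣ r)).filter
        (fun χ => orderOf χ = d)).card = Nat.totient d := by
      have heq : (univ.filter (fun χ : MulChar F ℂ => orderOf χ ∣ r)).filter
          (fun χ => orderOf χ = d) = univ.filter (fun χ : MulChar F ℂ => orderOf χ = d) := by
        ext χ
        simp only [Finset.mem_filter, mem_univ, true_and]
        exact ⟨fun h => h.2, fun h => ⟨h ▸ hdr, h⟩⟩
      rw [heq]
      have hdn : d ∣ Fintype.card (MulChar F ℂ) := by
        rw [card_mulChar]
        exact hdr.trans hrn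
      exact IsCyclic.card_orderOf_eq_totient hdn
    rw [hcard, totient_cast d]
    have hd0' : (d : ℝ) ≠ 0 := Nat.cast_ne_zero.mpr hd0
    rw [thetaFn, ← hA, ← Finset.prod_sdiff hPFd]
    field_simp
  rw [Finset.sum_congr rfl hfiber, Finset.sum_const, nsmul_eq_mul]
  rw [hr, card_divisors_prod_primes hAp]
  rw [Wfn, hA]
  push_cast
  ring

lemma primeFactors_mul_prime {p e : ℕ} (hp : p.Prime) (he0 : e ≠ 0) :
    (p * e).primeFactors = insert p e.primeFactors := by
  rw [Nat.primeFactors_mul hp.ne_zero he0, Nat.Prime.primeFactors hp]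
  ext q
  simp [or_comm]

lemma thetaFn_mul_prime {p e : ℕ} (hp : p.Prime) (hpe : ¬ p ∣ e) (he0 : e ≠ 0) :
    thetaFn (p * e) = (1 - 1 / (p : ℝ)) * thetaFn e := by
  have hpA : p ∉ e.primeFactors := fun h => hpe (Nat.dvd_of_mem_primeFactors h)
  rw [thetaFn, thetaFn, primeFactors_mul_prime hp he0, Finset.prod_insert hpA]

lemma Wfn_mul_prime {p e : ℕ} (hp : p.Prime) (hpe : ¬ p ∣ e) (he0 : e ≠ 0) :
    Wfn (p * e) = 2 * Wfn e := by
  have hpA : p ∉ e.primeFactors := fun h => hpe (Nat.dvd_of_mem_primeFactors h)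
  rw [Wfn, Wfn, primeFactors_mul_prime hp he0, Finset.card_insert_of_notMem hpA, pow_succ]
  ring

lemma one_sub_inv_nonneg {p : ℕ} (hp : p.Prime) : (0:ℝ) ≤ 1 - 1 / (p : ℝ) := by
  have h1 : (1 : ℝ) ≤ p := by exact_mod_cast hp.one_lt.le
  have h2 : 1 / (p : ℝ) ≤ 1 := by rw [div_le_one (by linarith)]; exact h1
  linarith

lemma ce_diff_one {p e : ℕ} (hp : p.Prime) (hpe : ¬ p ∣ e) (he0 : e ≠ 0) :
    ce (p * e) (1 : MulChar F ℂ) - (1 - 1 / (p : ℝ)) * ce e (1 : MulChar F ℂ) = 0 := by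
  rw [ce_one, ce_one, thetaFn_mul_prime hp hpe he0, sub_self]

lemma ce_diff_abs {p e : ℕ} (hp : p.Prime) (hpe : ¬ p ∣ e) (he0 : e ≠ 0) (χ : MulChar F ℂ) :
    |ce (p * e) χ - (1 - 1 / (p : ℝ)) * ce e χ|
      = |ce (p * e) χ| - (1 - 1 / (p : ℝ)) * |ce e χ| := by
  have hpA : p ∉ e.primeFactors := fun h => hpe (Nat.dvd_of_mem_primeFactors h)
  have hp1 : (0:ℝ) ≤ 1 - 1 / (p : ℝ) := one_sub_inv_nonneg hp
  have hA' : (p * e).primeFactors = insert p e.primeFactors := primeFactors_mul_prime hp he0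
  by_cases hsq : Squarefree (orderOf χ)
  · by_cases hBA : (orderOf χ).primeFactors ⊆ e.primeFactors
    · have hpB : p ∉ (orderOf χ).primeFactors := fun h => hpA (hBA h)
      have h1 : ce (p * e) χ = (1 - 1 / (p : ℝ)) * ce e χ := by
        rw [ce_eq, ce_eq, hA', if_pos ⟨hsq, hBA.trans (Finset.subset_insert p _)⟩,
          if_pos ⟨hsq, hBA⟩, Finset.insert_sdiff_of_notMem _ hpB,
          Finset.prod_insert (fun h => hpA (Finset.mem_sdiff.mp h).1)]
        ring
      rw [h1, sub_self, abs_zero, abs_mul, abs_of_nonneg hp1, sub_self]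
    · have h0 : ce e χ = 0 := by rw [ce_eq, if_neg (fun hx => hBA hx.2)]
      rw [h0, mul_zero, sub_zero, abs_zero, mul_zero, sub_zero]
  · have h0 : ce e χ = 0 := by rw [ce_eq, if_neg (fun hx => hsq hx.1)]
    have h0' : ce (p * e) χ = 0 := by rw [ce_eq, if_neg (fun hx => hsq hx.1)]
    rw [h0, h0', mul_zero, sub_zero, abs_zero, mul_zero, sub_zero]

lemma sum_abs_ce_diff {p e : ℕ} (hp : p.Prime) (hpe : ¬ p ∣ e)
    (hpen : p * e ∣ Fintype.card F - 1) (hed : e ∣ Fintype.card F - 1) :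
    ∑ χ : MulChar F ℂ, |ce (p * e) χ - (1 - 1 / (p : ℝ)) * ce e χ|
      = (1 - 1 / (p : ℝ)) * (thetaFn e * (Wfn e : ℝ)) := by
  have hn0 : Fintype.card F - 1 ≠ 0 := by
    have : 2 ≤ Fintype.card F := Fintype.one_lt_card
    omega
  have he0 : e ≠ 0 := fun h => hn0 (by simpa [h] using hed)
  calc ∑ χ : MulChar F ℂ, |ce (p * e) χ - (1 - 1 / (p : ℝ)) * ce e χ|
      = ∑ χ : MulChar F ℂ, (|ce (p * e) χ| - (1 - 1 / (p : ℝ)) * |ce e χ|) :=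
        Finset.sum_congr rfl fun χ _ => ce_diff_abs hp hpe he0 χ
    _ = (∑ χ : MulChar F ℂ, |ce (p * e) χ|)
        - (1 - 1 / (p : ℝ)) * ∑ χ : MulChar F ℂ, |ce e χ| := by
        rw [Finset.sum_sub_distrib, Finset.mul_sum]
    _ = thetaFn (p * e) * (Wfn (p * e) : ℝ)
        - (1 - 1 / (p : ℝ)) * (thetaFn e * (Wfn e : ℝ)) := by
        rw [sum_abs_ce hpen, sum_abs_ce hed]
    _ = (1 - 1 / (p : ℝ)) * (thetaFn e * (Wfn e : ℝ)) := by
        rw [thetaFn_mul_prime hp hpe he0, Wfn_mul_prime hp hpe he0]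
        push_cast
        ring

lemma norm_coef_term (x y : ℝ) (z : ℂ) : ‖(x:ℂ) * (y:ℂ) * z‖ = |x| * |y| * ‖z‖ := by
  rw [norm_mul, norm_mul, Complex.norm_real, Complex.norm_real, Real.norm_eq_abs,
    Real.norm_eq_abs]

lemma sum_product_mul (f g : MulChar F ℂ → ℝ) (s : ℝ) :
    ∑ x ∈ (univ ×ˢ univ : Finset (MulChar F ℂ × MulChar F ℂ)), f x.1 * g x.2 * s
      = (∑ χ : MulChar F ℂ, f χ) * (∑ χ : MulChar F ℂ, g χ) * s := by
  have h1 : (∑ χ : MulChar F ℂ, f χ) * (∑ χ : MulChar F ℂ, g χ)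
      = ∑ χ₁ : MulChar F ℂ, ∑ χ₂ : MulChar F ℂ, f χ₁ * g χ₂ :=
    Finset.sum_mul_sum _ _ _ _
  rw [Finset.sum_product, h1, Finset.sum_mul]
  exact Finset.sum_congr rfl fun χ₁ _ => by rw [Finset.sum_mul]

/-- Main estimate: `|N(e,e) - θ(e)²(q-2)| ≤ ((θW)² - θ²)√q`. -/
lemma Ncnt_main_est (ha : a ≠ 0) (hc : c ≠ 0) {e : ℕ} (hed : e ∣ Fintype.card F - 1) :
    ‖(Ncnt a c e e : ℂ) - ((thetaFn e ^ 2 * ((Fintype.card F : ℝ) - 2) : ℝ) : ℂ)‖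
      ≤ ((thetaFn e * (Wfn e : ℝ)) ^ 2 - thetaFn e ^ 2) * Real.sqrt (Fintype.card F) := by
  classical
  set G : MulChar F ℂ × MulChar F ℂ → ℂ :=
    fun x => (ce e x.1 : ℂ) * (ce e x.2 : ℂ) * Tsum a c x.1 x.2 with hGdef
  have hmem : ((1, 1) : MulChar F ℂ × MulChar F ℂ) ∈
      (univ ×ˢ univ : Finset (MulChar F ℂ × MulChar F ℂ)) := by simp
  have hG : (Ncnt a c e e : ℂ) = ∑ x ∈ (univ ×ˢ univ :
      Finset (MulChar F ℂ × MulChar F ℂ)), G x := by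
    rw [Ncnt_eq ha hc hed hed, Finset.sum_product]
  have h11 : G (1, 1) = ((thetaFn e ^ 2 * ((Fintype.card F : ℝ) - 2) : ℝ) : ℂ) := by
    rw [hGdef]
    simp only []
    rw [ce_one, Tsum_one_one ha hc]
    push_cast
    ring
  rw [hG, ← Finset.add_sum_erase _ G hmem, h11, add_sub_cancel_left]
  calc ‖∑ x ∈ (univ ×ˢ univ : Finset (MulChar F ℂ × MulChar F ℂ)).erase (1,1), G x‖
      ≤ ∑ x ∈ (univ ×ˢ univ : Finset (MulChar F ℂ × MulChar F ℂ)).erase (1,1), ‖G x‖ :=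
        norm_sum_le _ _
    _ ≤ ∑ x ∈ (univ ×ˢ univ : Finset (MulChar F ℂ × MulChar F ℂ)).erase (1,1),
          |ce e x.1| * |ce e x.2| * Real.sqrt (Fintype.card F) := by
        refine Finset.sum_le_sum fun x hx => ?_
        have hx1 : ¬(x.1 = 1 ∧ x.2 = 1) := by
          rintro ⟨hh1, hh2⟩
          have hx' : x = (1, 1) := Prod.ext hh1 hh2
          rw [hx'] at hx
          exact (Finset.notMem_erase _ _) hx
        rw [hGdef]
        simp only []
        rw [norm_coef_term]
        have h2 := norm_Tsum_le ha hc hx1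
        have h3 : (0:ℝ) ≤ |ce e x.1| * |ce e x.2| := mul_nonneg (abs_nonneg _) (abs_nonneg _)
        calc |ce e x.1| * |ce e x.2| * ‖Tsum a c x.1 x.2‖
            ≤ |ce e x.1| * |ce e x.2| * Real.sqrt (Fintype.card F) := by
              exact mul_le_mul_of_nonneg_left h2 h3
          _ = _ := rfl
    _ = (∑ x ∈ (univ ×ˢ univ : Finset (MulChar F ℂ × MulChar F ℂ)),
          |ce e x.1| * |ce e x.2| * Real.sqrt (Fintype.card F))
        - thetaFn e ^ 2 * Real.sqrt (Fintype.card F) := by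
        rw [← Finset.add_sum_erase _ _ hmem]
        have : |ce e (1 : MulChar F ℂ)| * |ce e (1 : MulChar F ℂ)| * Real.sqrt (Fintype.card F)
            = thetaFn e ^ 2 * Real.sqrt (Fintype.card F) := by
          rw [ce_one, abs_of_nonneg (thetaFn_nonneg e)]
          ring
        rw [this]
        ring
    _ = ((thetaFn e * (Wfn e : ℝ)) ^ 2 - thetaFn e ^ 2) * Real.sqrt (Fintype.card F) := by
        have h := sum_product_mul (F := F) (fun χ => |ce e χ|) (fun χ => |ce e χ|)
          (Real.sqrt (Fintype.card F))
        rw [h, sum_abs_ce hed]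
        ring

/-- Difference estimate: `|N(pe,e) - (1-1/p)N(e,e)| ≤ (1-1/p)(θW)²√q`. -/
lemma Ncnt_diff_est (ha : a ≠ 0) (hc : c ≠ 0) {p e : ℕ} (hp : p.Prime) (hpe : ¬ p ∣ e)
    (hpen : p * e ∣ Fintype.card F - 1) (hed : e ∣ Fintype.card F - 1) :
    ‖(Ncnt a c (p * e) e : ℂ) - (((1 - 1 / (p : ℝ)) : ℝ) : ℂ) * (Ncnt a c e e : ℂ)‖
      ≤ (1 - 1 / (p : ℝ)) * (thetaFn e * (Wfn e : ℝ)) ^ 2 * Real.sqrt (Fintype.card F) := by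
  classical
  have hn0 : Fintype.card F - 1 ≠ 0 := by
    have : 2 ≤ Fintype.card F := Fintype.one_lt_card
    omega
  have he0 : e ≠ 0 := fun h => hn0 (by simpa [h] using hed)
  rw [Ncnt_eq ha hc hpen hed, Ncnt_eq ha hc hed hed,
    ← Finset.sum_product (f := fun x : MulChar F ℂ × MulChar F ℂ =>
      (ce (p * e) x.1 : ℂ) * (ce e x.2 : ℂ) * Tsum a c x.1 x.2),
    ← Finset.sum_product (f := fun x : MulChar F ℂ × MulChar F ℂ =>
      (ce e x.1 : ℂ) * (ce e x.2 : ℂ) * Tsum a c x.1 x.2),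
    Finset.mul_sum, ← Finset.sum_sub_distrib]
  have hterm : ∀ x : MulChar F ℂ × MulChar F ℂ,
      (ce (p * e) x.1 : ℂ) * (ce e x.2 : ℂ) * Tsum a c x.1 x.2
        - (((1 - 1 / (p : ℝ)) : ℝ) : ℂ) * ((ce e x.1 : ℂ) * (ce e x.2 : ℂ) * Tsum a c x.1 x.2)
      = ((ce (p * e) x.1 - (1 - 1 / (p : ℝ)) * ce e x.1 : ℝ) : ℂ) * (ce e x.2 : ℂ)
          * Tsum a c x.1 x.2 := by
    intro x
    push_cast
    ring
  calc ‖∑ x ∈ (univ ×ˢ univ : Finset (MulChar F ℂ × MulChar F ℂ)), _‖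
      ≤ ∑ x ∈ (univ ×ˢ univ : Finset (MulChar F ℂ × MulChar F ℂ)),
        |ce (p * e) x.1 - (1 - 1 / (p : ℝ)) * ce e x.1| * |ce e x.2|
          * Real.sqrt (Fintype.card F) := by
        refine (norm_sum_le _ _).trans (Finset.sum_le_sum fun x _ => ?_)
        rw [hterm x, norm_coef_term]
        by_cases hx1 : x.1 = 1 ∧ x.2 = 1
        · rw [hx1.1]
          rw [ce_diff_one hp hpe he0]
          simp [Real.sqrt_nonneg]
        · exact mul_le_mul_of_nonneg_left (norm_Tsum_le ha hc hx1)
            (mul_nonneg (abs_nonneg _) (abs_nonneg _))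
    _ = (1 - 1 / (p : ℝ)) * (thetaFn e * (Wfn e : ℝ)) ^ 2 * Real.sqrt (Fintype.card F) := by
        have h := sum_product_mul (F := F)
          (fun χ => |ce (p * e) χ - (1 - 1 / (p : ℝ)) * ce e χ|) (fun χ => |ce e χ|)
          (Real.sqrt (Fintype.card F))
        rw [h, sum_abs_ce_diff hp hpe hpen hed, sum_abs_ce hed]
        ring

/-- Symmetric difference estimate: `|N(e,pe) - (1-1/p)N(e,e)| ≤ (1-1/p)(θW)²√q`. -/
lemma Ncnt_diff_est' (ha : a ≠ 0) (hc : c ≠ 0) {p e : ℕ} (hp : p.Prime) (hpe : ¬ p ∣ e)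
    (hpen : p * e ∣ Fintype.card F - 1) (hed : e ∣ Fintype.card F - 1) :
    ‖(Ncnt a c e (p * e) : ℂ) - (((1 - 1 / (p : ℝ)) : ℝ) : ℂ) * (Ncnt a c e e : ℂ)‖
      ≤ (1 - 1 / (p : ℝ)) * (thetaFn e * (Wfn e : ℝ)) ^ 2 * Real.sqrt (Fintype.card F) := by
  classical
  have hn0 : Fintype.card F - 1 ≠ 0 := by
    have : 2 ≤ Fintype.card F := Fintype.one_lt_card
    omega
  have he0 : e ≠ 0 := fun h => hn0 (by simpa [h] using hed)
  rw [Ncnt_eq ha hc hed hpen, Ncnt_eq ha hc hed hed,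
    ← Finset.sum_product (f := fun x : MulChar F ℂ × MulChar F ℂ =>
      (ce e x.1 : ℂ) * (ce (p * e) x.2 : ℂ) * Tsum a c x.1 x.2),
    ← Finset.sum_product (f := fun x : MulChar F ℂ × MulChar F ℂ =>
      (ce e x.1 : ℂ) * (ce e x.2 : ℂ) * Tsum a c x.1 x.2),
    Finset.mul_sum, ← Finset.sum_sub_distrib]
  have hterm : ∀ x : MulChar F ℂ × MulChar F ℂ,
      (ce e x.1 : ℂ) * (ce (p * e) x.2 : ℂ) * Tsum a c x.1 x.2
        - (((1 - 1 / (p : ℝ)) : ℝ) : ℂ) * ((ce e x.1 : ℂ) * (ce e x.2 : ℂ) * Tsum a c x.1 x.2)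
      = ((ce e x.1 : ℝ) : ℂ) * ((ce (p * e) x.2 - (1 - 1 / (p : ℝ)) * ce e x.2 : ℝ) : ℂ)
          * Tsum a c x.1 x.2 := by
    intro x
    push_cast
    ring
  calc ‖∑ x ∈ (univ ×ˢ univ : Finset (MulChar F ℂ × MulChar F ℂ)), _‖
      ≤ ∑ x ∈ (univ ×ˢ univ : Finset (MulChar F ℂ × MulChar F ℂ)),
        |ce e x.1| * |ce (p * e) x.2 - (1 - 1 / (p : ℝ)) * ce e x.2|
          * Real.sqrt (Fintype.card F) := by
        refine (norm_sum_le _ _).trans (Finset.sum_le_sum fun x _ => ?_)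
        rw [hterm x, norm_coef_term]
        by_cases hx1 : x.1 = 1 ∧ x.2 = 1
        · rw [hx1.2]
          rw [ce_diff_one hp hpe he0]
          simp [Real.sqrt_nonneg]
        · exact mul_le_mul_of_nonneg_left (norm_Tsum_le ha hc hx1)
            (mul_nonneg (abs_nonneg _) (abs_nonneg _))
    _ = (1 - 1 / (p : ℝ)) * (thetaFn e * (Wfn e : ℝ)) ^ 2 * Real.sqrt (Fintype.card F) := by
        have h := sum_product_mul (F := F)
          (fun χ => |ce e χ|) (fun χ => |ce (p * e) χ - (1 - 1 / (p : ℝ)) * ce e χ|)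
          (Real.sqrt (Fintype.card F))
        rw [h, sum_abs_ce_diff hp hpe hpen hed, sum_abs_ce hed]
        ring

/-- The set counted by `Ncnt`, as a `Finset`. -/
noncomputable def Sset (a c : F) (e₁ e₂ : ℕ) : Finset F :=
  univ.filter fun g => IsEFree e₁ g ∧ IsEFree e₂ (a - c * g)

lemma mem_Sset {a c : F} {e₁ e₂ : ℕ} {g : F} :
    g ∈ Sset a c e₁ e₂ ↔ IsEFree e₁ g ∧ IsEFree e₂ (a - c * g) := by
  simp [Sset]

lemma Ncnt_eq_card (a c : F) (e₁ e₂ : ℕ) : Ncnt a c e₁ e₂ = (Sset a c e₁ e₂).card := by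
  have h : {g : F | IsEFree e₁ g ∧ IsEFree e₂ (a - c * g)}.toFinset = Sset a c e₁ e₂ := by
    ext g
    simp [Sset]
  rw [Ncnt, Set.ncard_eq_toFinset_card', h]

lemma isEFree_mono {d e : ℕ} (hde : d ∣ e) {g : F} (h : IsEFree e g) : IsEFree d g :=
  ⟨h.1, fun m hm hex => h.2 m (hm.trans hde) hex⟩

lemma isEFree_total {n e : ℕ} (hn0 : n ≠ 0) (he : e ∣ n) {P : Finset ℕ}
    (hP : P = n.primeFactors \ e.primeFactors) {g : F}
    (hg : IsEFree e g) (hall : ∀ p ∈ P, IsEFree (p * e) g) : IsEFree n g := by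
  have he0 : e ≠ 0 := fun h => hn0 (by simpa [h] using he)
  rw [isEFree_iff_primes hn0]
  refine ⟨hg.1, fun r hr hex => ?_⟩
  have hrp := Nat.prime_of_mem_primeFactors hr
  by_cases hre : r ∈ e.primeFactors
  · exact ((isEFree_iff_primes he0 g).mp hg).2 r hre hex
  · have hrP : r ∈ P := by rw [hP, mem_sdiff]; exact ⟨hr, hre⟩
    exact hrp.ne_one ((hall r hrP).2 r (dvd_mul_right r e) hex)

lemma cast_card_sdiff_ge (s t : Finset F) :
    (s.card : ℝ) - (t.card : ℝ) ≤ ((s \ t).card : ℝ) := by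
  have h := Finset.le_card_sdiff t s
  have h2 : ((s.card - t.card : ℕ) : ℝ) ≤ ((s \ t).card : ℝ) := by exact_mod_cast h
  rcases le_total t.card s.card with h3 | h3
  · calc (s.card : ℝ) - (t.card : ℝ) = ((s.card - t.card : ℕ) : ℝ) := by
          rw [Nat.cast_sub h3]
      _ ≤ _ := h2
  · have h4 : (s.card : ℝ) ≤ (t.card : ℝ) := by exact_mod_cast h3
    have h5 : (0 : ℝ) ≤ ((s \ t).card : ℝ) := Nat.cast_nonneg _
    linarith

/-- The sieve inequality. -/
lemma sieve_ineq (a c : F) {e : ℕ} (he : e ∣ Fintype.card F - 1)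
    {P : Finset ℕ} (hP : P = (Fintype.card F - 1).primeFactors \ e.primeFactors) :
    (Ncnt a c (Fintype.card F - 1) (Fintype.card F - 1) : ℝ)
      ≥ (∑ p ∈ P, ((Ncnt a c (p * e) e : ℝ) + (Ncnt a c e (p * e) : ℝ)))
        - (2 * (P.card : ℝ) - 1) * (Ncnt a c e e : ℝ) := by
  classical
  set n := Fintype.card F - 1 with hn
  have hn0 : n ≠ 0 := by
    have : 2 ≤ Fintype.card F := Fintype.one_lt_card
    omega
  have he0 : e ≠ 0 := fun h => hn0 (by simpa [h] using he)
  set A := Sset a c e e with hA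
  set U := P.biUnion (fun p => (A \ Sset a c (p * e) e) ∪ (A \ Sset a c e (p * e))) with hU
  have hBsub : ∀ p, Sset a c (p * e) e ⊆ A := by
    intro p g hg
    have h := mem_Sset.mp hg
    exact mem_Sset.mpr ⟨isEFree_mono (dvd_mul_left e p) h.1, h.2⟩
  have hCsub : ∀ p, Sset a c e (p * e) ⊆ A := by
    intro p g hg
    have h := mem_Sset.mp hg
    exact mem_Sset.mpr ⟨h.1, isEFree_mono (dvd_mul_left e p) h.2⟩
  have hsub : A \ U ⊆ Sset a c n n := by
    intro g hg
    rw [mem_sdiff] at hg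
    obtain ⟨hgA, hgU⟩ := hg
    have hmem : ∀ p ∈ P, g ∈ Sset a c (p * e) e ∧ g ∈ Sset a c e (p * e) := by
      intro p hp
      by_contra hcon
      apply hgU
      rw [hU, Finset.mem_biUnion]
      refine ⟨p, hp, ?_⟩
      rw [Finset.mem_union]
      rcases not_and_or.mp hcon with h | h
      · exact Or.inl (mem_sdiff.mpr ⟨hgA, h⟩)
      · exact Or.inr (mem_sdiff.mpr ⟨hgA, h⟩)
    obtain ⟨hgA1, hgA2⟩ := mem_Sset.mp hgA
    refine mem_Sset.mpr ⟨?_, ?_⟩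
    · refine isEFree_total hn0 he hP hgA1 fun p hp => ?_
      exact (mem_Sset.mp (hmem p hp).1).1
    · refine isEFree_total hn0 he hP hgA2 fun p hp => ?_
      exact (mem_Sset.mp (hmem p hp).2).2
  -- now the cardinality computation
  have hcard1 : ((A \ U).card : ℝ) ≤ (Ncnt a c n n : ℝ) := by
    rw [Ncnt_eq_card]
    exact_mod_cast Finset.card_le_card hsub
  have hcard2 : (A.card : ℝ) - (U.card : ℝ) ≤ ((A \ U).card : ℝ) := cast_card_sdiff_ge A U
  have hcard3 : (U.card : ℝ) ≤ ∑ p ∈ P,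
      (((A.card : ℝ) - ((Sset a c (p * e) e).card : ℝ))
        + ((A.card : ℝ) - ((Sset a c e (p * e)).card : ℝ))) := by
    calc (U.card : ℝ) ≤ ((∑ p ∈ P, ((A \ Sset a c (p * e) e) ∪ (A \ Sset a c e (p * e))).card : ℕ) : ℝ) := by
          exact_mod_cast Finset.card_biUnion_le
      _ = ∑ p ∈ P, (((A \ Sset a c (p * e) e) ∪ (A \ Sset a c e (p * e))).card : ℝ) := by
          push_cast; rfl
      _ ≤ _ := by
          refine Finset.sum_le_sum fun p hp => ?_
          calc (((A \ Sset a c (p * e) e) ∪ (A \ Sset a c e (p * e))).card : ℝ)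
              ≤ ((A \ Sset a c (p * e) e).card : ℝ) + ((A \ Sset a c e (p * e)).card : ℝ) := by
                exact_mod_cast Finset.card_union_le _ _
            _ = (((A.card : ℝ) - ((Sset a c (p * e) e).card : ℝ))
                + ((A.card : ℝ) - ((Sset a c e (p * e)).card : ℝ))) := by
                rw [Finset.card_sdiff_of_subset (hBsub p), Finset.card_sdiff_of_subset (hCsub p),
                  Nat.cast_sub (Finset.card_le_card (hBsub p)),
                  Nat.cast_sub (Finset.card_le_card (hCsub p))]
  have hsum : ∑ p ∈ P, (((A.card : ℝ) - ((Sset a c (p * e) e).card : ℝ))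
      + ((A.card : ℝ) - ((Sset a c e (p * e)).card : ℝ)))
      = 2 * (P.card : ℝ) * (A.card : ℝ)
        - ∑ p ∈ P, (((Sset a c (p * e) e).card : ℝ) + ((Sset a c e (p * e)).card : ℝ)) := by
    rw [Finset.sum_congr rfl (fun p _ => show ((A.card : ℝ) - ((Sset a c (p * e) e).card : ℝ))
      + ((A.card : ℝ) - ((Sset a c e (p * e)).card : ℝ))
      = 2 * (A.card : ℝ) - (((Sset a c (p * e) e).card : ℝ) + ((Sset a c e (p * e)).card : ℝ))
      from by ring)]
    rw [Finset.sum_sub_distrib, Finset.sum_const, nsmul_eq_mul]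
    ring
  have hNee : (Ncnt a c e e : ℝ) = (A.card : ℝ) := by rw [Ncnt_eq_card]
  have hNs : ∀ p ∈ P, (Ncnt a c (p * e) e : ℝ) = ((Sset a c (p * e) e).card : ℝ)
      ∧ (Ncnt a c e (p * e) : ℝ) = ((Sset a c e (p * e)).card : ℝ) := by
    intro p _
    constructor <;> rw [Ncnt_eq_card]
  have hsum2 : ∑ p ∈ P, ((Ncnt a c (p * e) e : ℝ) + (Ncnt a c e (p * e) : ℝ))
      = ∑ p ∈ P, (((Sset a c (p * e) e).card : ℝ) + ((Sset a c e (p * e)).card : ℝ)) := by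
    refine Finset.sum_congr rfl fun p hp => ?_
    rw [(hNs p hp).1, (hNs p hp).2]
  rw [hsum2, hNee]
  have := hcard3
  linarith [hcard1, hcard2, hsum ▸ hcard3]

end SieveAux


set_option maxHeartbeats 1000000 in
/-- The estimate completing the proof of Theorem 2: for `q ≥ 4` a prime power, `e ∣ q - 1`,
`p₁, …, p_s` (`s ≥ 1`) the distinct primes dividing `q - 1` but not `e`, and
`δ = 1 - 2 ∑ᵢ 1/pᵢ > 0`, one has
`N(q-1, q-1) ≥ δ·θ(e)²·√q·(√q - W(e)² - ((2s-1)/δ + 1)·W(e)²)`. -/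
theorem N_final_lower_bound (q : ℕ) (hq : IsPrimePow q) (hq4 : 4 ≤ q)
    (F : Type*) [Field F] [Fintype F] (hcard : Fintype.card F = q)
    (a c : F) (ha : a ≠ 0) (hc : c ≠ 0)
    (e : ℕ) (he : e ∣ q - 1)
    (P : Finset ℕ) (hP : P = (q - 1).primeFactors \ e.primeFactors)
    (hs : P.Nonempty)
    (δ : ℝ) (hδ : δ = 1 - 2 * ∑ p ∈ P, (1 / p : ℝ)) (hδpos : 0 < δ) :
    (Ncnt a c (q - 1) (q - 1) : ℝ) ≥
      δ * thetaFn e ^ 2 * Real.sqrt q *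
        (Real.sqrt q - (Wfn e : ℝ) ^ 2 - ((2 * P.card - 1) / δ + 1) * (Wfn e : ℝ) ^ 2) := by
  classical
  letI : DecidableEq F := Classical.decEq F
  subst hcard
  have hq4' : (4:ℝ) ≤ (Fintype.card F : ℝ) := by exact_mod_cast hq4
  set Q : ℝ := Real.sqrt (Fintype.card F) with hQ
  have hQ2 : (2:ℝ) ≤ Q := by
    rw [hQ, show (2:ℝ) = Real.sqrt 4 by
      rw [show (4:ℝ) = 2^2 by norm_num, Real.sqrt_sq (by norm_num : (0:ℝ) ≤ 2)]]
    exact Real.sqrt_le_sqrt hq4'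
  have hQQ : Q * Q = (Fintype.card F : ℝ) := Real.mul_self_sqrt (by positivity)
  have hn0 : Fintype.card F - 1 ≠ 0 := by omega
  have he0 : e ≠ 0 := fun h => hn0 (by simpa [h] using he)
  have hpfacts : ∀ p ∈ P, Nat.Prime p ∧ ¬ p ∣ e ∧ p * e ∣ Fintype.card F - 1 := by
    intro p hp
    rw [hP, Finset.mem_sdiff] at hp
    obtain ⟨hp1, hp2⟩ := hp
    have hpp := Nat.prime_of_mem_primeFactors hp1
    have hpdvd := Nat.dvd_of_mem_primeFactors hp1
    have hpe : ¬ p ∣ e := fun h => hp2 (Nat.mem_primeFactors.mpr ⟨hpp, h, he0⟩)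
    exact ⟨hpp, hpe, Nat.Coprime.mul_dvd_of_dvd_of_dvd
      ((Nat.Prime.coprime_iff_not_dvd hpp).mpr hpe) hpdvd he⟩
  set θ : ℝ := thetaFn e with hθ
  set W : ℝ := ((Wfn e : ℕ) : ℝ) with hW
  set s : ℝ := ((P.card : ℕ) : ℝ) with hsdef
  set Nnn : ℝ := (Ncnt a c (Fintype.card F - 1) (Fintype.card F - 1) : ℝ) with hNnn
  set Nee : ℝ := (Ncnt a c e e : ℝ) with hNee
  -- sieve inequality
  have R1 : Nnn ≥ (∑ p ∈ P, ((Ncnt a c (p * e) e : ℝ) + (Ncnt a c e (p * e) : ℝ)))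
      - (2 * s - 1) * Nee := SieveAux.sieve_ineq a c he hP
  -- main estimate
  have R3 : |Nee - θ^2 * ((Fintype.card F : ℝ) - 2)| ≤ ((θ*W)^2 - θ^2) * Q := by
    have h := SieveAux.Ncnt_main_est ha hc he
    rwa [show ((Ncnt a c e e : ℂ) - ((thetaFn e ^ 2 * ((Fintype.card F : ℝ) - 2) : ℝ) : ℂ))
        = (((Nee - θ^2 * ((Fintype.card F : ℝ) - 2)) : ℝ) : ℂ) by
          rw [hNee, hθ]; push_cast; ring,
      Complex.norm_real, Real.norm_eq_abs] at h
  -- difference estimates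
  have R2 : ∀ p ∈ P, |(Ncnt a c (p*e) e : ℝ) - (1 - 1/(p:ℝ)) * Nee|
      ≤ (1 - 1/(p:ℝ)) * (θ*W)^2 * Q := by
    intro p hp
    obtain ⟨hpp, hpe, hpen⟩ := hpfacts p hp
    have h := SieveAux.Ncnt_diff_est ha hc hpp hpe hpen he
    rwa [show ((Ncnt a c (p*e) e : ℂ) - (((1 - 1/(p:ℝ)) : ℝ) : ℂ) * (Ncnt a c e e : ℂ))
        = ((((Ncnt a c (p*e) e : ℝ) - (1 - 1/(p:ℝ)) * Nee) : ℝ) : ℂ) by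
          rw [hNee]; push_cast; ring,
      Complex.norm_real, Real.norm_eq_abs] at h
  have R2' : ∀ p ∈ P, |(Ncnt a c e (p*e) : ℝ) - (1 - 1/(p:ℝ)) * Nee|
      ≤ (1 - 1/(p:ℝ)) * (θ*W)^2 * Q := by
    intro p hp
    obtain ⟨hpp, hpe, hpen⟩ := hpfacts p hp
    have h := SieveAux.Ncnt_diff_est' ha hc hpp hpe hpen he
    rwa [show ((Ncnt a c e (p*e) : ℂ) - (((1 - 1/(p:ℝ)) : ℝ) : ℂ) * (Ncnt a c e e : ℂ))
        = ((((Ncnt a c e (p*e) : ℝ) - (1 - 1/(p:ℝ)) * Nee) : ℝ) : ℂ) by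
          rw [hNee]; push_cast; ring,
      Complex.norm_real, Real.norm_eq_abs] at h
  -- sum of the lower bounds
  have hsig2 : 2 * (∑ p ∈ P, (1 - 1/(p:ℝ))) = 2*s - 1 + δ := by
    rw [Finset.sum_sub_distrib, Finset.sum_const, nsmul_eq_mul, hδ, hsdef]
    ring
  have hsumlow' : ∑ p ∈ P, ((Ncnt a c (p * e) e : ℝ) + (Ncnt a c e (p * e) : ℝ))
      ≥ (2*s - 1 + δ) * Nee - (2*s - 1 + δ) * ((θ*W)^2 * Q) := by
    have hlow : ∀ p ∈ P, (2*(1 - 1/(p:ℝ))) * Nee - (2*(1 - 1/(p:ℝ))) * ((θ*W)^2 * Q)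
        ≤ (Ncnt a c (p * e) e : ℝ) + (Ncnt a c e (p * e) : ℝ) := by
      intro p hp
      have h1 := abs_le.mp (R2 p hp)
      have h2 := abs_le.mp (R2' p hp)
      have := h1.1
      have := h2.1
      nlinarith [h1.1, h2.1]
    have hsum := Finset.sum_le_sum hlow
    have heq : ∑ p ∈ P, ((2*(1 - 1/(p:ℝ))) * Nee - (2*(1 - 1/(p:ℝ))) * ((θ*W)^2 * Q))
        = 2 * (∑ p ∈ P, (1 - 1/(p:ℝ))) * Nee
          - 2 * (∑ p ∈ P, (1 - 1/(p:ℝ))) * ((θ*W)^2 * Q) := by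
      rw [Finset.sum_sub_distrib, ← Finset.sum_mul, ← Finset.sum_mul, ← Finset.mul_sum]
    rw [heq, hsig2] at hsum
    exact hsum
  have key1 : Nnn ≥ δ * Nee - (2*s - 1 + δ) * ((θ*W)^2 * Q) := by
    nlinarith [R1, hsumlow']
  have key2 : Nee ≥ θ^2*((Fintype.card F : ℝ) - 2) - ((θ*W)^2 - θ^2)*Q := by
    have := (abs_le.mp R3).1
    linarith
  have key3 : δ * Nee ≥ δ * (θ^2*((Fintype.card F : ℝ) - 2) - ((θ*W)^2 - θ^2)*Q) :=
    mul_le_mul_of_nonneg_left key2 hδpos.le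
  have hδne : δ ≠ 0 := ne_of_gt hδpos
  have htar : δ * θ^2 * Q * (Q - W^2 - ((2*s - 1)/δ + 1) * W^2)
      = δ*θ^2*(Q*Q) - δ*θ^2*Q*W^2 - (2*s - 1)*θ^2*Q*W^2 - δ*θ^2*Q*W^2 := by
    field_simp
    ring
  have hQQ2 : δ*θ^2*(Q*Q) = δ*θ^2*(Fintype.card F : ℝ) := by rw [hQQ]
  have hθnn : 0 ≤ θ := SieveAux.thetaFn_nonneg e
  have hslack : 0 ≤ δ*θ^2*(Q - 2) :=
    mul_nonneg (mul_nonneg hδpos.le (sq_nonneg θ)) (by linarith)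
  rw [ge_iff_le, htar]
  nlinarith [key1, key3, hQQ2, hslack]
end
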